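/- arXiv:2401.07474 — 5 statements merged into one kernel-verified Lean document; each statement's English description precedes it below -/
import Mathlib

section
/- Let n ≥ 1, f ∈ 𝒮(ℝⁿ×ℝⁿ; ℂ), ℏ ∈ ℝ, and j ∈ {1,…,n}. Then for every φ ∈ 𝒮(ℝⁿ; ℂ) and x ∈ ℝⁿ, the commutator of ρ_ℏ(f̂) with multiplication by the coordinate x_j satisfies x_j·(ρ_ℏ(f̂)φ)(x) − (ρ_ℏ(f̂)(x_j φ))(x) = −(ℏ/i)·(ρ_ℏ((∂f/∂ξ_j)^∧)φ)(x), where ∂f/∂ξ_j is the partial derivative of f in the j-th coordinate of the second variable and x_jφ denotes pointwise multiplication by the j-th coordinate. -/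
open MeasureTheory RealInnerProductSpace

/-- Fourier transform in the second variable:
`f̂(x,y) = ∫ f(x,ξ) e^{−i⟨y,ξ⟩} dξ`. -/
noncomputable def fhat {n : ℕ}
    (f : EuclideanSpace ℝ (Fin n) × EuclideanSpace ℝ (Fin n) → ℂ)
    (x y : EuclideanSpace ℝ (Fin n)) : ℂ :=
  ∫ ξ : EuclideanSpace ℝ (Fin n),
    f (x, ξ) * Complex.exp (-(Complex.I * ((⟪y, ξ⟫ : ℝ) : ℂ)))

/-- The operator `ρ_ℏ(F)`: `(ρ_ℏ(F)φ)(x) = (2π)^{−n} ∫ F(x,y) φ(x + ℏy) dy`. -/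
noncomputable def rho {n : ℕ} (ℏ : ℝ)
    (F : EuclideanSpace ℝ (Fin n) → EuclideanSpace ℝ (Fin n) → ℂ)
    (φ : EuclideanSpace ℝ (Fin n) → ℂ) (x : EuclideanSpace ℝ (Fin n)) : ℂ :=
  (((2 * Real.pi) ^ n : ℝ) : ℂ)⁻¹ * ∫ y : EuclideanSpace ℝ (Fin n), F x y * φ (x + ℏ • y)

open FourierTransform SchwartzMap Real Complex

namespace Statement5Aux

variable {n : ℕ}

local notation "E" => EuclideanSpace ℝ (Fin n)

lemma hasTemperateGrowth_pair (x : E) :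
    Function.HasTemperateGrowth (fun ξ : E => ((x, ξ) : E × E)) := by
  have hderiv : ∀ ξ : E, HasFDerivAt (fun ξ : E => ((x, ξ) : E × E))
      (ContinuousLinearMap.inr ℝ E E) ξ := fun ξ =>
    (hasFDerivAt_const x ξ).prodMk (hasFDerivAt_id ξ)
  refine Function.HasTemperateGrowth.of_fderiv (k := 1) (C := ‖x‖ + 1) ?_ ?_ (fun ξ => ?_)
  · have : (fderiv ℝ (fun ξ : E => ((x, ξ) : E × E)))
        = fun _ => ContinuousLinearMap.inr ℝ E E := funext fun ξ => (hderiv ξ).fderiv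
    rw [this]
    exact Function.HasTemperateGrowth.const _
  · exact fun ξ => (hderiv ξ).differentiableAt
  · have h1 : ‖((x, ξ) : E × E)‖ ≤ ‖x‖ + ‖ξ‖ := by
      rw [Prod.norm_def]
      exact max_le (le_add_of_nonneg_right (norm_nonneg _))
        (le_add_of_nonneg_left (norm_nonneg _))
    nlinarith [norm_nonneg x, norm_nonneg ξ]

/-- Restriction of a Schwartz function on `E × E` to a slice `{x} × E`. -/
noncomputable def slice (x : E) : 𝓢(E × E, ℂ) →L[ℝ] 𝓢(E, ℂ) :=
  SchwartzMap.compCLM ℝ (hasTemperateGrowth_pair x)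
    ⟨1, 1, fun ξ => by
      have : ‖ξ‖ ≤ ‖((x, ξ) : E × E)‖ := le_max_right _ _
      nlinarith [norm_nonneg (((x, ξ)) : E × E)]⟩

@[simp] lemma slice_apply (x : E) (f : 𝓢(E × E, ℂ)) (ξ : E) :
    slice x f ξ = f (x, ξ) := rfl

lemma fhat_eq (f : 𝓢(E × E, ℂ)) (x y : E) :
    fhat ⇑f x y = 𝓕 (⇑(slice x f)) ((2 * Real.pi)⁻¹ • y) := by
  rw [Real.fourier_eq']
  unfold fhat
  congr 1
  ext ξ
  rw [slice_apply, smul_eq_mul, real_inner_smul_right, mul_comm]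
  congr 1
  rw [real_inner_comm ξ y]
  have h2π : (2 * Real.pi) ≠ 0 := by positivity
  have harg : -2 * Real.pi * ((2 * Real.pi)⁻¹ * ⟪ξ, y⟫) = -⟪ξ, y⟫ := by
    field_simp
  rw [harg]
  push_cast
  ring

lemma fderiv_slice (f : 𝓢(E × E, ℂ)) (x ξ : E) :
    fderiv ℝ (⇑(slice x f)) ξ = (fderiv ℝ ⇑f (x, ξ)).comp (ContinuousLinearMap.inr ℝ E E) := by
  have hT : HasFDerivAt (fun ξ : E => ((x, ξ) : E × E))
      (ContinuousLinearMap.inr ℝ E E) ξ := (hasFDerivAt_const x ξ).prodMk (hasFDerivAt_id ξ)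
  have : HasFDerivAt (⇑(slice x f))
      ((fderiv ℝ ⇑f (x, ξ)).comp (ContinuousLinearMap.inr ℝ E E)) ξ :=
    (f.differentiable (x, ξ)).hasFDerivAt.comp ξ hT
  exact this.fderiv

lemma integrable_fderiv_slice (f : 𝓢(E × E, ℂ)) (x : E) :
    Integrable (fderiv ℝ (⇑(slice x f))) := by
  have h : (fderiv ℝ (⇑(slice x f))) = ⇑(SchwartzMap.fderivCLM ℝ E ℂ (slice x f)) := by
    funext ξ
    rw [SchwartzMap.fderivCLM_apply]
  rw [h]
  exact (SchwartzMap.fderivCLM ℝ E ℂ (slice x f)).integrable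

/-- Key identity: Fourier transform (in the sense of `fhat`) of the partial derivative. -/
lemma fhat_deriv (f : 𝓢(E × E, ℂ)) (x y : E) (j : Fin n) :
    fhat (fun p => fderiv ℝ ⇑f p (0, EuclideanSpace.single j 1)) x y
      = Complex.I * (y j) * fhat ⇑f x y := by
  classical
  set ej : E := EuclideanSpace.single j 1 with hej
  set g : 𝓢(E, ℂ) := slice x f with hg
  set w : E := (2 * Real.pi)⁻¹ • y with hw
  -- rewrite LHS through the slice of the Schwartz derivative
  have hpd : (fun p => fderiv ℝ ⇑f p ((0 : E), ej))
      = ⇑(LineDeriv.lineDerivOp ((0 : E), ej) f) := by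
    funext p
    rw [SchwartzMap.lineDerivOp_apply_eq_fderiv]
  have hL : fhat (fun p => fderiv ℝ ⇑f p ((0 : E), ej)) x y
      = 𝓕 (⇑(slice x (LineDeriv.lineDerivOp ((0 : E), ej) f))) w := by
    rw [hpd, fhat_eq]
  -- evaluation of the Fourier transform of the fderiv
  have hgj : ∀ ξ, (slice x (LineDeriv.lineDerivOp ((0 : E), ej) f)) ξ
      = fderiv ℝ (⇑g) ξ ej := by
    intro ξ
    rw [slice_apply, SchwartzMap.lineDerivOp_apply_eq_fderiv, hg, fderiv_slice]
    simp
  have hint : Integrable (fun ξ : E => 𝐞 (-⟪ξ, w⟫) • fderiv ℝ (⇑g) ξ) := by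
    refine (Real.fourierIntegral_convergent_iff w).mpr ?_
    exact integrable_fderiv_slice f x
  have heval : 𝓕 (⇑(slice x (LineDeriv.lineDerivOp ((0 : E), ej) f))) w
      = (𝓕 (fderiv ℝ (⇑g)) w) ej := by
    rw [Real.fourier_eq, Real.fourier_eq,
      ContinuousLinearMap.integral_apply hint]
    congr 1
    funext ξ
    rw [hgj ξ]
    rfl
  -- Fourier transform of the derivative
  have hFd : 𝓕 (fderiv ℝ (⇑g)) = VectorFourier.fourierSMulRight (-(innerSL ℝ)) (𝓕 (⇑g)) :=
    Real.fourier_fderiv g.integrable g.differentiable (integrable_fderiv_slice f x)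
  have hinner : ⟪w, ej⟫ = (2 * Real.pi)⁻¹ * y j := by
    rw [hw, real_inner_smul_left, hej]
    have : ⟪y, EuclideanSpace.single j (1 : ℝ)⟫ = y j := by
      rw [EuclideanSpace.inner_single_right]
      simp
    rw [this]
  have h2π : (2 * Real.pi) ≠ 0 := by positivity
  rw [hL, heval, hFd]
  rw [fhat_eq, ← hw]
  simp only [VectorFourier.fourierSMulRight_apply]
  rw [ContinuousLinearMap.neg_apply, ContinuousLinearMap.neg_apply, innerSL_apply_apply, hinner]
  simp only [neg_smul, smul_neg, neg_neg, Complex.real_smul, smul_eq_mul]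
  have h2πc : ((2 * Real.pi : ℝ) : ℂ) ≠ 0 := by exact_mod_cast h2π
  push_cast at h2πc ⊢
  field_simp
  ring

lemma integrable_main (h φ : 𝓢(E, ℂ)) (x : E) (ℏ : ℝ) :
    Integrable (fun y : E => 𝓕 ⇑h ((2 * Real.pi)⁻¹ • y) * φ (x + ℏ • y)) := by
  have hG : Integrable (fun y : E => 𝓕 ⇑h ((2 * Real.pi)⁻¹ • y)) := by
    have h1 := (SchwartzMap.fourierTransformCLM ℝ h).integrable (μ := volume)
    rw [SchwartzMap.fourierTransformCLM_apply] at h1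
    exact h1.comp_smul (by positivity : ((2 * Real.pi)⁻¹ : ℝ) ≠ 0)
  have hbd : ∃ C, ∀ y : E, ‖φ (x + ℏ • y)‖ ≤ C :=
    ⟨SchwartzMap.seminorm ℝ 0 0 φ, fun y => φ.norm_le_seminorm ℝ _⟩
  have hmeas : AEStronglyMeasurable (fun y : E => φ (x + ℏ • y)) volume :=
    (φ.continuous.comp (continuous_const.add (continuous_id.const_smul ℏ))).aestronglyMeasurable
  exact (hG.bdd_mul hmeas (Filter.Eventually.of_forall hbd.choose_spec)).congr (Filter.Eventually.of_forall fun y => mul_comm _ _)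

end Statement5Aux

/-- For Schwartz `f` on `ℝⁿ×ℝⁿ`, `ℏ ∈ ℝ`, `j ∈ {1,…,n}`, every Schwartz
`φ` and every `x`, the commutator of `ρ_ℏ(f̂)` with multiplication by the coordinate `x_j`
satisfies `x_j·(ρ_ℏ(f̂)φ)(x) − (ρ_ℏ(f̂)(x_jφ))(x) = −(ℏ/i)·(ρ_ℏ((∂f/∂ξ_j)^)φ)(x)`. -/
theorem statement5 (n : ℕ) (hn : 1 ≤ n)
    (f : SchwartzMap (EuclideanSpace ℝ (Fin n) × EuclideanSpace ℝ (Fin n)) ℂ)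
    (ℏ : ℝ) (j : Fin n) (φ : SchwartzMap (EuclideanSpace ℝ (Fin n)) ℂ) :
    ∀ x : EuclideanSpace ℝ (Fin n),
      ((x j : ℝ) : ℂ) * rho ℏ (fhat ⇑f) ⇑φ x
        - rho ℏ (fhat ⇑f) (fun x' => ((x' j : ℝ) : ℂ) * φ x') x
      = -((ℏ : ℂ) / Complex.I) *
          rho ℏ (fhat (fun p => fderiv ℝ ⇑f p (0, EuclideanSpace.single j 1))) ⇑φ x := by
  intro x
  open Statement5Aux in
  have hpd : (fun p => fderiv ℝ ⇑f p ((0 : EuclideanSpace ℝ (Fin n)), EuclideanSpace.single j 1))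
      = ⇑(LineDeriv.lineDerivOp ((0 : EuclideanSpace ℝ (Fin n)), EuclideanSpace.single j (1 : ℝ)) f) := by
    funext p
    rw [SchwartzMap.lineDerivOp_apply_eq_fderiv]
  have hA : Integrable (fun y => fhat ⇑f x y * φ (x + ℏ • y)) := by
    have h1 : (fun y => fhat ⇑f x y * φ (x + ℏ • y))
        = fun y => 𝓕 (⇑(slice x f)) ((2 * Real.pi)⁻¹ • y) * φ (x + ℏ • y) := by
      funext y; rw [fhat_eq]
    rw [h1]
    exact integrable_main (slice x f) φ x ℏ
  have hC : Integrable (fun y =>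
      fhat (fun p => fderiv ℝ ⇑f p (0, EuclideanSpace.single j 1)) x y * φ (x + ℏ • y)) := by
    have h1 : (fun y => fhat (fun p => fderiv ℝ ⇑f p (0, EuclideanSpace.single j 1)) x y
          * φ (x + ℏ • y))
        = fun y => 𝓕 (⇑(slice x (LineDeriv.lineDerivOp
            ((0 : EuclideanSpace ℝ (Fin n)), EuclideanSpace.single j (1 : ℝ)) f)))
            ((2 * Real.pi)⁻¹ • y) * φ (x + ℏ • y) := by
      funext y; rw [hpd, fhat_eq]
    rw [h1]
    exact integrable_main _ φ x ℏ
  have hBptw : ∀ y, fhat ⇑f x y * ((((x + ℏ • y) j : ℝ) : ℂ) * φ (x + ℏ • y))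
      = ((x j : ℝ) : ℂ) * (fhat ⇑f x y * φ (x + ℏ • y))
        + ((ℏ : ℂ) / Complex.I) *
          (fhat (fun p => fderiv ℝ ⇑f p (0, EuclideanSpace.single j 1)) x y * φ (x + ℏ • y)) := by
    intro y
    rw [fhat_deriv]
    have hcoord : ((x + ℏ • y) j : ℝ) = x j + ℏ * y j := by
      simp [PiLp.add_apply, PiLp.smul_apply, smul_eq_mul]
    rw [hcoord]
    push_cast
    field_simp
  have hintegral : (∫ y, fhat ⇑f x y * ((((x + ℏ • y) j : ℝ) : ℂ) * φ (x + ℏ • y)))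
      = ((x j : ℝ) : ℂ) * (∫ y, fhat ⇑f x y * φ (x + ℏ • y))
        + ((ℏ : ℂ) / Complex.I) * ∫ y,
            fhat (fun p => fderiv ℝ ⇑f p (0, EuclideanSpace.single j 1)) x y * φ (x + ℏ • y) := by
    calc (∫ y, fhat ⇑f x y * ((((x + ℏ • y) j : ℝ) : ℂ) * φ (x + ℏ • y)))
        = ∫ y, (((x j : ℝ) : ℂ) * (fhat ⇑f x y * φ (x + ℏ • y))
          + ((ℏ : ℂ) / Complex.I) *
            (fhat (fun p => fderiv ℝ ⇑f p (0, EuclideanSpace.single j 1)) x y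
              * φ (x + ℏ • y))) := by
          simp only [hBptw]
      _ = _ := by
          rw [integral_add (hA.const_mul _) (hC.const_mul _), integral_const_mul,
            integral_const_mul]
  simp only [rho]
  rw [hintegral]
  ring
end

section
/- Let n ≥ 1, f₁, f₂ ∈ 𝒮(ℝⁿ×ℝⁿ; ℂ), and ℏ ≠ 0. Then for every φ ∈ 𝒮(ℝⁿ; ℂ), the composition of the operators satisfies ρ_ℏ(f̂₁)(ρ_ℏ(f̂₂)φ) = ρ_ℏ(f̂₁ ∗_H f̂₂)φ, where the twisted convolution is defined by (f̂₁ ∗_H f̂₂)(x, y) = (2π)^{−n} ∫_{ℝⁿ} f̂₁(x, z) f̂₂(x + ℏz, y − z) dz. -/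
open MeasureTheory RealInnerProductSpace

/-- The twisted (Heisenberg) convolution
`(F ∗_H G)(x,y) = (2π)^{−n} ∫ F(x,z) G(x + ℏz, y − z) dz`. -/
noncomputable def convH {n : ℕ} (ℏ : ℝ)
    (F G : EuclideanSpace ℝ (Fin n) → EuclideanSpace ℝ (Fin n) → ℂ)
    (x y : EuclideanSpace ℝ (Fin n)) : ℂ :=
  (((2 * Real.pi) ^ n : ℝ) : ℂ)⁻¹ *
    ∫ z : EuclideanSpace ℝ (Fin n), F x z * G (x + ℏ • z) (y - z)


section Aux
variable {n : ℕ}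

local notation "E" => EuclideanSpace ℝ (Fin n)

/-- temperate growth of an affine map -/
lemma hasTemperateGrowth_affine {F : Type*} [NormedAddCommGroup F] [NormedSpace ℝ F]
    (A : E →L[ℝ] F) (b : F) :
    Function.HasTemperateGrowth (fun ξ : E => b + A ξ) := by
  have hd : ∀ ξ : E, HasFDerivAt (fun ξ : E => b + A ξ) (A : E →L[ℝ] F) ξ :=
    fun ξ => (A.hasFDerivAt (x := ξ)).const_add b
  apply Function.HasTemperateGrowth.of_fderiv (k := 1) (C := ‖b‖ + ‖A‖)
  · have : (fderiv ℝ fun ξ : E => b + A ξ) = fun _ => (A : E →L[ℝ] F) := by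
      funext ξ; exact (hd ξ).fderiv
    rw [this]
    exact Function.HasTemperateGrowth.const _
  · exact fun ξ => (hd ξ).differentiableAt
  · intro ξ
    have : ‖b + A ξ‖ ≤ ‖b‖ + ‖A‖ * ‖ξ‖ :=
      (norm_add_le _ _).trans (by gcongr; exact A.le_opNorm ξ)
    refine this.trans ?_
    have h1 : (0:ℝ) ≤ ‖b‖ := norm_nonneg _
    have h2 : (0:ℝ) ≤ ‖A‖ := norm_nonneg _
    have h3 : (0:ℝ) ≤ ‖ξ‖ := norm_nonneg _
    nlinarith

/-- slice of a 2n-dim Schwartz function is Schwartz -/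
lemma exists_schwartz_slice (f : SchwartzMap (E × E) ℂ) (x : E) :
    ∃ g : SchwartzMap E ℂ, ⇑g = fun ξ : E => f (x, ξ) := by
  have hg : Function.HasTemperateGrowth (fun ξ : E => ((x, 0) : E × E) + (ContinuousLinearMap.inr ℝ E E) ξ) :=
    hasTemperateGrowth_affine _ _
  have hup : ∃ (k : ℕ) (C : ℝ), ∀ ξ : E,
      ‖ξ‖ ≤ C * (1 + ‖((x, 0) : E × E) + (ContinuousLinearMap.inr ℝ E E) ξ‖) ^ k := by
    refine ⟨1, 1, fun ξ => ?_⟩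
    have h1 : ((x, 0) : E × E) + (ContinuousLinearMap.inr ℝ E E) ξ = (x, ξ) := by
      simp [Prod.ext_iff]
    rw [h1]
    have := norm_snd_le ((x, ξ) : E × E)
    simp only [pow_one, one_mul]
    calc ‖ξ‖ ≤ ‖((x, ξ) : E × E)‖ := this
    _ ≤ 1 + ‖((x, ξ) : E × E)‖ := by linarith [norm_nonneg ((x, ξ) : E × E)]
  refine ⟨SchwartzMap.compCLM ℝ hg hup f, ?_⟩
  rw [SchwartzMap.compCLM_apply]
  funext ξ
  simp [Function.comp, Prod.ext_iff]

/-- affine reparametrization of a Schwartz function is Schwartz -/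
lemma exists_schwartz_affine (φ : SchwartzMap E ℂ) (x : E) {ℏ : ℝ} (hℏ : ℏ ≠ 0) :
    ∃ ψ : SchwartzMap E ℂ, ⇑ψ = fun y : E => φ (x + ℏ • y) := by
  have hg : Function.HasTemperateGrowth (fun y : E => x + (ℏ • ContinuousLinearMap.id ℝ E) y) :=
    hasTemperateGrowth_affine _ _
  have hup : ∃ (k : ℕ) (C : ℝ), ∀ y : E,
      ‖y‖ ≤ C * (1 + ‖x + (ℏ • ContinuousLinearMap.id ℝ E) y‖) ^ k := by
    refine ⟨1, |ℏ|⁻¹ * (1 + ‖x‖), fun y => ?_⟩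
    have h0 : (ℏ • ContinuousLinearMap.id ℝ E) y = ℏ • y := rfl
    rw [h0]
    have h1 : ‖ℏ • y‖ ≤ ‖x‖ + ‖x + ℏ • y‖ := by
      calc ‖ℏ • y‖ = ‖(x + ℏ • y) - x‖ := by rw [add_sub_cancel_left]
      _ ≤ ‖x + ℏ • y‖ + ‖x‖ := norm_sub_le _ _
      _ = ‖x‖ + ‖x + ℏ • y‖ := add_comm _ _
    have h2 : ‖ℏ • y‖ = |ℏ| * ‖y‖ := by rw [norm_smul, Real.norm_eq_abs]
    have h3 : 0 < |ℏ| := abs_pos.mpr hℏ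
    have h4 : (0:ℝ) ≤ ‖x‖ := norm_nonneg _
    have h5 : (0:ℝ) ≤ ‖x + ℏ • y‖ := norm_nonneg _
    have h6 : |ℏ| * ‖y‖ ≤ ‖x‖ + ‖x + ℏ • y‖ := h2 ▸ h1
    rw [pow_one]
    rw [← mul_le_mul_iff_right₀ h3, ← mul_assoc, ← mul_assoc, mul_inv_cancel₀ (ne_of_gt h3), one_mul]
    nlinarith
  refine ⟨SchwartzMap.compCLM ℝ hg hup φ, ?_⟩
  rw [SchwartzMap.compCLM_apply]
  funext y
  simp [Function.comp]

end Aux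


section Aux2
variable {n : ℕ}
local notation "E" => EuclideanSpace ℝ (Fin n)

lemma schwartz_decay_snd (f : SchwartzMap (E × E) ℂ) :
    ∃ C : ℝ, 0 ≤ C ∧ ∀ p : E × E, ‖f p‖ ≤ C * ((1 + ‖p.2‖) ^ (n + 1))⁻¹ := by
  set D : ℝ := 2 ^ (n+1) *
    (Finset.Iic ((n+1, 0) : ℕ × ℕ)).sup (fun m => SchwartzMap.seminorm ℝ m.1 m.2) f with hD
  have key : ∀ p : E × E, (1 + ‖p‖) ^ (n+1) * ‖f p‖ ≤ D := by
    intro p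
    have := SchwartzMap.one_add_le_sup_seminorm_apply (𝕜 := ℝ) (m := ((n+1, 0) : ℕ × ℕ))
      (k := n+1) (n := 0) le_rfl le_rfl f p
    rwa [norm_iteratedFDeriv_zero] at this
  have hD0 : 0 ≤ D := le_trans (by positivity) (key 0)
  refine ⟨D, hD0, fun p => ?_⟩
  have hpos : (0:ℝ) < (1 + ‖p.2‖) ^ (n+1) := by positivity
  have h2 : (1 + ‖p.2‖) ^ (n+1) * ‖f p‖ ≤ D := by
    refine le_trans ?_ (key p)
    have h1 : (1 + ‖p.2‖) ≤ (1 + ‖p‖) := by linarith [norm_snd_le p]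
    exact mul_le_mul_of_nonneg_right
      (pow_le_pow_left₀ (by positivity) h1 _) (norm_nonneg _)
  rw [← div_eq_mul_inv, le_div_iff₀ hpos]
  linarith [h2, mul_comm ((1 + ‖p.2‖) ^ (n+1)) ‖f p‖]

lemma integrable_decay : Integrable (fun ξ : E => ((1 + ‖ξ‖) ^ (n + 1))⁻¹) := by
  have h : Integrable (fun ξ : E => (1 + ‖ξ‖) ^ (-((n+1 : ℕ) : ℝ))) := by
    apply integrable_one_add_norm
    simp only [finrank_euclideanSpace_fin]
    push_cast; linarith
  have heq : (fun ξ : E => (1 + ‖ξ‖) ^ (-((n+1 : ℕ) : ℝ)))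
      = fun ξ : E => ((1 + ‖ξ‖) ^ (n + 1))⁻¹ := by
    funext ξ
    rw [Real.rpow_neg (by positivity), Real.rpow_natCast]
  rwa [heq] at h

lemma norm_fhat_integrand (f : SchwartzMap (E × E) ℂ) (x y ξ : E) :
    ‖f (x, ξ) * Complex.exp (-(Complex.I * ((⟪y, ξ⟫ : ℝ) : ℂ)))‖ = ‖f (x, ξ)‖ := by
  rw [norm_mul, Complex.norm_exp]
  simp

lemma fhat_bound (f : SchwartzMap (E × E) ℂ) :
    ∃ B : ℝ, 0 ≤ B ∧ ∀ x y : E, ‖fhat ⇑f x y‖ ≤ B := by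
  obtain ⟨C, hC0, hC⟩ := schwartz_decay_snd f
  refine ⟨C * ∫ ξ : E, ((1 + ‖ξ‖) ^ (n + 1))⁻¹, by positivity, fun x y => ?_⟩
  calc ‖fhat ⇑f x y‖
      ≤ ∫ ξ : E, ‖f (x, ξ) * Complex.exp (-(Complex.I * ((⟪y, ξ⟫ : ℝ) : ℂ)))‖ :=
        norm_integral_le_integral_norm _
    _ ≤ ∫ ξ : E, C * ((1 + ‖ξ‖) ^ (n + 1))⁻¹ := by
        apply integral_mono_of_nonneg
        · exact Filter.Eventually.of_forall fun ξ => norm_nonneg _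
        · exact integrable_decay.const_mul C
        · refine Filter.Eventually.of_forall fun ξ => ?_
          show ‖f (x, ξ) * Complex.exp (-(Complex.I * ((⟪y, ξ⟫ : ℝ) : ℂ)))‖
            ≤ C * ((1 + ‖ξ‖) ^ (n + 1))⁻¹
          rw [norm_fhat_integrand]
          exact hC (x, ξ)
    _ = C * ∫ ξ : E, ((1 + ‖ξ‖) ^ (n + 1))⁻¹ := integral_const_mul C _

lemma fhat_integrand_continuous_fst (f : SchwartzMap (E × E) ℂ) (ξ : E) :
    Continuous (fun p : E × E =>
      f (p.1, ξ) * Complex.exp (-(Complex.I * ((⟪p.2, ξ⟫ : ℝ) : ℂ)))) := by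
  refine Continuous.mul ?_ ?_
  · exact f.continuous.comp (continuous_fst.prodMk continuous_const)
  · exact Complex.continuous_exp.comp
      ((continuous_const.mul (Complex.continuous_ofReal.comp
        (continuous_snd.inner continuous_const))).neg)

lemma fhat_integrand_continuous_snd (f : SchwartzMap (E × E) ℂ) (p : E × E) :
    Continuous (fun ξ : E =>
      f (p.1, ξ) * Complex.exp (-(Complex.I * ((⟪p.2, ξ⟫ : ℝ) : ℂ)))) := by
  refine Continuous.mul ?_ ?_
  · exact f.continuous.comp (continuous_const.prodMk continuous_id)
  · exact Complex.continuous_exp.comp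
      ((continuous_const.mul (Complex.continuous_ofReal.comp
        (continuous_const.inner continuous_id))).neg)

lemma fhat_continuous (f : SchwartzMap (E × E) ℂ) :
    Continuous (fun p : E × E => fhat ⇑f p.1 p.2) := by
  obtain ⟨C, hC0, hC⟩ := schwartz_decay_snd f
  apply continuous_of_dominated
    (bound := fun ξ : E => C * ((1 + ‖ξ‖) ^ (n + 1))⁻¹)
  · exact fun p => (fhat_integrand_continuous_snd f p).aestronglyMeasurable
  · intro p
    refine Filter.Eventually.of_forall fun ξ => ?_
    show ‖f (p.1, ξ) * Complex.exp (-(Complex.I * ((⟪p.2, ξ⟫ : ℝ) : ℂ)))‖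
      ≤ C * ((1 + ‖ξ‖) ^ (n + 1))⁻¹
    rw [norm_fhat_integrand]
    exact hC (p.1, ξ)
  · exact integrable_decay.const_mul C
  · exact Filter.Eventually.of_forall fun ξ => fhat_integrand_continuous_fst f ξ

lemma fhat_eq_fourier (f : SchwartzMap (E × E) ℂ) (x y : E) :
    fhat ⇑f x y = FourierTransform.fourier (fun ξ : E => f (x, ξ)) ((2 * Real.pi)⁻¹ • y) := by
  rw [Real.fourier_eq']
  unfold fhat
  congr 1
  funext ξ
  rw [smul_eq_mul, mul_comm]
  congr 1
  have harg : -2 * Real.pi * ⟪ξ, (2 * Real.pi)⁻¹ • y⟫ = -⟪y, ξ⟫ := by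
    rw [real_inner_smul_right, real_inner_comm]
    have : Real.pi ≠ 0 := Real.pi_ne_zero
    field_simp
  rw [harg]
  push_cast
  ring

lemma fhat_integrable_snd (f : SchwartzMap (E × E) ℂ) (x : E) :
    Integrable (fun z : E => fhat ⇑f x z) := by
  obtain ⟨g, hg⟩ := exists_schwartz_slice f x
  have h2 : Integrable (fun w : E => FourierTransform.fourier ⇑g w) := by
    have h3 := (SchwartzMap.fourierTransformCLM ℂ g).integrable (μ := volume)
    rwa [SchwartzMap.fourierTransformCLM_apply, SchwartzMap.fourier_coe] at h3
  have h4 : Integrable (fun z : E => FourierTransform.fourier ⇑g ((2 * Real.pi)⁻¹ • z)) :=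
    h2.comp_smul (inv_ne_zero (by positivity))
  have h5 : (fun z : E => fhat ⇑f x z)
      = fun z : E => FourierTransform.fourier ⇑g ((2 * Real.pi)⁻¹ • z) := by
    funext z
    rw [fhat_eq_fourier, ← hg]
  rwa [h5]

end Aux2


section Main
variable {n : ℕ}
local notation "E" => EuclideanSpace ℝ (Fin n)

lemma key_integrable (f₁ f₂ : SchwartzMap (E × E) ℂ) (φ : SchwartzMap E ℂ)
    {ℏ : ℝ} (hℏ : ℏ ≠ 0) (x : E) :
    Integrable (fun q : E × E =>
      fhat ⇑f₁ x q.2 * fhat ⇑f₂ (x + ℏ • q.2) (q.1 - q.2) * φ (x + ℏ • q.1))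
      (volume.prod volume) := by
  obtain ⟨B, hB0, hB⟩ := fhat_bound f₂
  obtain ⟨ψ, hψ⟩ := exists_schwartz_affine φ x hℏ
  have h1 : Integrable (fun y : E => B * ‖φ (x + ℏ • y)‖) := by
    have h0 := (ψ.integrable (μ := volume)).norm
    rw [hψ] at h0
    exact h0.const_mul B
  have hg : Integrable (fun q : E × E =>
      (B * ‖φ (x + ℏ • q.1)‖) * ‖fhat ⇑f₁ x q.2‖) (volume.prod volume) :=
    h1.mul_prod (fhat_integrable_snd f₁ x).norm
  apply Integrable.mono' hg
  · have c1 : Continuous fun q : E × E => fhat ⇑f₁ x q.2 :=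
      (fhat_continuous f₁).comp (continuous_const.prodMk continuous_snd)
    have c2 : Continuous fun q : E × E => fhat ⇑f₂ (x + ℏ • q.2) (q.1 - q.2) :=
      (fhat_continuous f₂).comp
        ((continuous_const.add (continuous_snd.const_smul ℏ)).prodMk
          (continuous_fst.sub continuous_snd))
    have c3 : Continuous fun q : E × E => φ (x + ℏ • q.1) :=
      φ.continuous.comp (continuous_const.add (continuous_fst.const_smul ℏ))
    exact ((c1.mul c2).mul c3).aestronglyMeasurable
  · refine Filter.Eventually.of_forall fun q => ?_
    show ‖fhat ⇑f₁ x q.2 * fhat ⇑f₂ (x + ℏ • q.2) (q.1 - q.2) * φ (x + ℏ • q.1)‖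
      ≤ (B * ‖φ (x + ℏ • q.1)‖) * ‖fhat ⇑f₁ x q.2‖
    rw [norm_mul, norm_mul]
    have h2 := hB (x + ℏ • q.2) (q.1 - q.2)
    calc ‖fhat ⇑f₁ x q.2‖ * ‖fhat ⇑f₂ (x + ℏ • q.2) (q.1 - q.2)‖ * ‖φ (x + ℏ • q.1)‖
        ≤ ‖fhat ⇑f₁ x q.2‖ * B * ‖φ (x + ℏ • q.1)‖ := by gcongr
      _ = (B * ‖φ (x + ℏ • q.1)‖) * ‖fhat ⇑f₁ x q.2‖ := by ring

end Main

/-- For Schwartz `f₁, f₂` on `ℝⁿ×ℝⁿ` and `ℏ ≠ 0`, for every Schwartz `φ`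
the composition satisfies `ρ_ℏ(f̂₁)(ρ_ℏ(f̂₂)φ) = ρ_ℏ(f̂₁ ∗_H f̂₂)φ`. -/
theorem statement6 (n : ℕ) (hn : 1 ≤ n)
    (f₁ f₂ : SchwartzMap (EuclideanSpace ℝ (Fin n) × EuclideanSpace ℝ (Fin n)) ℂ)
    (ℏ : ℝ) (hℏ : ℏ ≠ 0) (φ : SchwartzMap (EuclideanSpace ℝ (Fin n)) ℂ) :
    ∀ x : EuclideanSpace ℝ (Fin n),
      rho ℏ (fhat ⇑f₁) (rho ℏ (fhat ⇑f₂) ⇑φ) x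
        = rho ℏ (convH ℏ (fhat ⇑f₁) (fhat ⇑f₂)) ⇑φ x := by
  intro x
  simp only [rho, convH]
  have hL : (fun y : EuclideanSpace ℝ (Fin n) => fhat ⇑f₁ x y *
        ((((2 * Real.pi) ^ n : ℝ) : ℂ)⁻¹ *
          ∫ z : EuclideanSpace ℝ (Fin n),
            fhat ⇑f₂ (x + ℏ • y) z * φ ((x + ℏ • y) + ℏ • z)))
      = fun y : EuclideanSpace ℝ (Fin n) => (((2 * Real.pi) ^ n : ℝ) : ℂ)⁻¹ *
          ∫ z : EuclideanSpace ℝ (Fin n),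
            fhat ⇑f₁ x y * (fhat ⇑f₂ (x + ℏ • y) z * φ ((x + ℏ • y) + ℏ • z)) := by
    funext y
    rw [integral_const_mul, mul_left_comm]
  have hR : (fun y : EuclideanSpace ℝ (Fin n) =>
        ((((2 * Real.pi) ^ n : ℝ) : ℂ)⁻¹ *
          ∫ z : EuclideanSpace ℝ (Fin n),
            fhat ⇑f₁ x z * fhat ⇑f₂ (x + ℏ • z) (y - z)) * φ (x + ℏ • y))
      = fun y : EuclideanSpace ℝ (Fin n) => (((2 * Real.pi) ^ n : ℝ) : ℂ)⁻¹ *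
          ∫ z : EuclideanSpace ℝ (Fin n),
            fhat ⇑f₁ x z * fhat ⇑f₂ (x + ℏ • z) (y - z) * φ (x + ℏ • y) := by
    funext y
    rw [integral_mul_const, mul_assoc]
  rw [hL, hR, integral_const_mul, integral_const_mul]
  congr 1
  congr 1
  have hswap := integral_integral_swap
    (f := fun (y z : EuclideanSpace ℝ (Fin n)) =>
      fhat ⇑f₁ x z * fhat ⇑f₂ (x + ℏ • z) (y - z) * φ (x + ℏ • y))
    (key_integrable f₁ f₂ φ hℏ x)
  rw [hswap]
  have htrans : ∀ z : EuclideanSpace ℝ (Fin n),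
      (∫ y : EuclideanSpace ℝ (Fin n),
        fhat ⇑f₁ x z * fhat ⇑f₂ (x + ℏ • z) (y - z) * φ (x + ℏ • y))
      = ∫ y : EuclideanSpace ℝ (Fin n),
        fhat ⇑f₁ x z * fhat ⇑f₂ (x + ℏ • z) y * φ (x + ℏ • (y + z)) := by
    intro z
    rw [← integral_add_right_eq_self (μ := volume)
      (fun y : EuclideanSpace ℝ (Fin n) =>
        fhat ⇑f₁ x z * fhat ⇑f₂ (x + ℏ • z) (y - z) * φ (x + ℏ • y)) z]
    simp only [add_sub_cancel_right]
  simp_rw [htrans]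
  congr 1
  funext a
  congr 1
  funext b
  have harg : x + ℏ • a + ℏ • b = x + ℏ • (b + a) := by
    rw [smul_add]; abel
  rw [← harg, mul_assoc]
end

section
/- Let d, k ≥ 1, m > 0, C > 0, R > 0, and let a : ℝᵈ → M_k(ℂ) be a continuous matrix-valued function such that for all z with ‖z‖ ≥ R, the matrix a(z)ᴴa(z) − C‖z‖^{2m}·1 is positive semidefinite (ellipticity of positive order m). Then the truncated graph projection ê_a(z) = e_{a(z)} − [[0,0],[0,1]], with blocks (1+aᴴa)⁻¹, (1+aᴴa)⁻¹aᴴ, a(1+aᴴa)⁻¹, and a(1+aᴴa)⁻¹aᴴ − 1, tends to 0 as ‖z‖ → ∞; that is, each of the four blocks (1+a(z)ᴴa(z))⁻¹, (1+a(z)ᴴa(z))⁻¹a(z)ᴴ, a(z)(1+a(z)ᴴa(z))⁻¹, and a(z)(1+a(z)ᴴa(z))⁻¹a(z)ᴴ − 1 converges to the zero matrix as ‖z‖ → ∞. -/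
open Matrix Filter
open scoped ComplexOrder

section Aux
open ContinuousLinearMap
open scoped InnerProductSpace

private lemma helper1 {c x y : ℝ} (hc : 0 < c) (hy : 0 ≤ y) (hx : 0 ≤ x)
    (h : c * x ^ 2 ≤ x * y) : x ≤ (1 / c) * y := by
  rcases hx.eq_or_lt with h0 | h0
  · rw [← h0]; positivity
  · have hcx : c * x ≤ y := by
      have := (mul_le_mul_iff_left₀ h0).2 (le_refl x)
      nlinarith
    rw [one_div, inv_mul_eq_div, le_div_iff₀ hc]; linarith

private lemma helper2 {x y : ℝ} (hx : 0 ≤ x) (hy : 0 ≤ y) (h : x ^ 2 ≤ y ^ 2) : x ≤ y := by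
  nlinarith

private lemma opEst {E : Type*} [NormedAddCommGroup E] [InnerProductSpace ℂ E] [FiniteDimensional ℂ E]
    (A S : E →L[ℂ] E) (c : ℝ) (hc : 0 < c)
    (hS1 : ∀ v, S v + (star A) (A (S v)) = v)
    (hell : ∀ x, c * ‖x‖ ^ 2 ≤ ‖A x‖ ^ 2) :
    (∀ v, ‖S v‖ ≤ (1 / c) * ‖v‖) ∧
    (∀ v, ‖S ((star A) v)‖ ≤ Real.sqrt (1 / c) * ‖v‖) ∧
    (∀ v, ‖A (S v)‖ ≤ Real.sqrt (1 / c) * ‖v‖) ∧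
    (∀ v, ‖A (S ((star A) v)) - v‖ ≤ (1 / c) * ‖v‖) := by
  have key : ∀ w v : E, w + (star A) (A w) = v →
      ‖w‖ ^ 2 + ‖A w‖ ^ 2 = RCLike.re ⟪w, v⟫_ℂ := by
    intro w v hwv
    rw [← hwv, inner_add_right, map_add, star_eq_adjoint, adjoint_inner_right,
      inner_self_eq_norm_sq, inner_self_eq_norm_sq]
  have reab : ∀ x y : E, RCLike.re ⟪x, y⟫_ℂ ≤ ‖x‖ * ‖y‖ := fun x y =>
    (RCLike.re_le_norm _).trans (norm_inner_le_norm x y)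
  -- (i)
  have e1 : ∀ v, ‖S v‖ ≤ (1 / c) * ‖v‖ := by
    intro v
    have hk := key (S v) v (hS1 v)
    have h3 : ‖S v‖ ^ 2 + ‖A (S v)‖ ^ 2 ≤ ‖S v‖ * ‖v‖ := hk ▸ reab _ _
    exact helper1 hc (norm_nonneg _) (norm_nonneg _) (by nlinarith [hell (S v)])
  -- (ii)
  have e2 : ∀ v, ‖S ((star A) v)‖ ≤ Real.sqrt (1 / c) * ‖v‖ := by
    intro v
    set w := S ((star A) v) with hw
    have hk := key w _ (hS1 ((star A) v))
    have h3 : ‖w‖ ^ 2 + ‖A w‖ ^ 2 ≤ ‖A w‖ * ‖v‖ := by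
      rw [hk, star_eq_adjoint, adjoint_inner_right]; exact reab _ _
    have hAw : ‖A w‖ ≤ ‖v‖ := by
      have := helper1 (c := 1) one_pos (norm_nonneg v) (norm_nonneg (A w)) (by nlinarith)
      simpa using this
    have hw2 : ‖w‖ ^ 2 ≤ (1 / c) * ‖v‖ ^ 2 := by
      have h5 : c * ‖w‖ ^ 2 ≤ ‖v‖ ^ 2 := by nlinarith [hell w]
      rw [one_div, inv_mul_eq_div, le_div_iff₀ hc]; linarith
    refine helper2 (norm_nonneg _) (by positivity) ?_
    rw [mul_pow, Real.sq_sqrt (by positivity)]; exact hw2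
  -- (iii)
  have e3 : ∀ v, ‖A (S v)‖ ≤ Real.sqrt (1 / c) * ‖v‖ := by
    intro v
    have hk := key (S v) v (hS1 v)
    have h3 : ‖S v‖ ^ 2 + ‖A (S v)‖ ^ 2 ≤ ‖S v‖ * ‖v‖ := hk ▸ reab _ _
    have h4 : ‖A (S v)‖ ^ 2 ≤ (1 / c) * ‖v‖ ^ 2 := by
      have := e1 v
      nlinarith [norm_nonneg (S v), norm_nonneg v]
    refine helper2 (norm_nonneg _) (by positivity) ?_
    rw [mul_pow, Real.sq_sqrt (by positivity)]; exact h4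
  refine ⟨e1, e2, e3, ?_⟩
  -- (iv)
  intro v
  set w := S ((star A) v) with hw
  set u := A w - v with hu
  have hAu : (star A) u = -w := by
    have h1 := hS1 ((star A) v)
    rw [hu, map_sub]
    have : (star A) (A w) = (star A) v - w := by rw [← h1]; abel
    rw [this]; abel
  -- A surjective
  have hinj : Function.Injective A := by
    intro x y hxy
    have h0 : A (x - y) = 0 := by rw [map_sub, hxy, sub_self]
    have := hell (x - y)
    rw [h0] at this
    simp only [norm_zero] at this
    have ht : ‖x - y‖ ^ 2 ≤ 0 := by
      have h2 : c * ‖x - y‖ ^ 2 ≤ c * 0 := by simpa using this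
      exact (mul_le_mul_iff_right₀ hc).1 h2
    have h3 : ‖x - y‖ ^ 2 = 0 := le_antisymm ht (sq_nonneg _)
    have h4 : ‖x - y‖ = 0 := by
      exact pow_eq_zero_iff (two_ne_zero) |>.1 h3
    rwa [norm_sub_eq_zero_iff] at h4
  have hsurj : Function.Surjective A := by
    have : Function.Injective (A : E →ₗ[ℂ] E) := hinj
    exact LinearMap.surjective_of_injective this
  obtain ⟨x, hx⟩ := hsurj u
  have hxy : RCLike.re ⟪x, (star A) u⟫_ℂ = ‖u‖ ^ 2 := by
    rw [← hx, star_eq_adjoint, adjoint_inner_right, inner_self_eq_norm_sq]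
  have hyw : ‖(star A) u‖ = ‖w‖ := by rw [hAu, norm_neg]
  have hx1 : ‖x‖ ≤ (1 / c) * ‖(star A) u‖ := by
    refine helper1 hc (norm_nonneg _) (norm_nonneg _) ?_
    calc c * ‖x‖ ^ 2 ≤ ‖A x‖ ^ 2 := hell x
      _ = RCLike.re ⟪x, (star A) u⟫_ℂ := by rw [hx, hxy]
      _ ≤ ‖x‖ * ‖(star A) u‖ := (RCLike.re_le_norm _).trans (norm_inner_le_norm _ _)
  have hu2 : ‖u‖ ^ 2 ≤ (1 / c) * ‖w‖ ^ 2 := by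
    calc ‖u‖ ^ 2 = RCLike.re ⟪x, (star A) u⟫_ℂ := hxy.symm
      _ ≤ ‖x‖ * ‖(star A) u‖ := (RCLike.re_le_norm _).trans (norm_inner_le_norm _ _)
      _ ≤ ((1 / c) * ‖(star A) u‖) * ‖(star A) u‖ :=
          mul_le_mul_of_nonneg_right hx1 (norm_nonneg _)
      _ = (1 / c) * ‖w‖ ^ 2 := by rw [hyw]; ring
  have hw2 := e2 v
  refine helper2 (norm_nonneg _) (by positivity) ?_
  calc ‖u‖ ^ 2 ≤ (1 / c) * ‖w‖ ^ 2 := hu2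
    _ ≤ (1 / c) * (Real.sqrt (1 / c) * ‖v‖) ^ 2 := by
        refine mul_le_mul_of_nonneg_left ?_ (by positivity)
        exact pow_le_pow_left₀ (norm_nonneg _) hw2 2
    _ = ((1 / c) * ‖v‖) ^ 2 := by
        rw [mul_pow, Real.sq_sqrt (by positivity)]; ring

private lemma entry_le {k : ℕ} (N : Matrix (Fin k) (Fin k) ℂ) (ε : ℝ)
    (h : ∀ v : EuclideanSpace ℂ (Fin k), ‖Matrix.toEuclideanCLM (𝕜 := ℂ) N v‖ ≤ ε * ‖v‖)
    (i j : Fin k) : ‖N i j‖ ≤ ε := by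
  set y := Matrix.toEuclideanCLM (𝕜 := ℂ) N (EuclideanSpace.single j 1) with hy
  have hyi : y i = N i j := by
    show (N *ᵥ (WithLp.equiv 2 _) (EuclideanSpace.single j (1 : ℂ))) i = N i j
    simp [Matrix.mulVec_single]
  have h1 : ‖N i j‖ ≤ ‖y‖ := by
    have h2 : ⟪EuclideanSpace.single i (1 : ℂ), y⟫_ℂ = y i := by
      simp [EuclideanSpace.inner_single_left]
    calc ‖N i j‖ = ‖⟪EuclideanSpace.single i (1 : ℂ), y⟫_ℂ‖ := by rw [h2, hyi]
      _ ≤ ‖EuclideanSpace.single i (1 : ℂ)‖ * ‖y‖ := norm_inner_le_norm _ _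
      _ = ‖y‖ := by simp [EuclideanSpace.norm_single]
  refine h1.trans ?_
  have := h (EuclideanSpace.single j 1)
  simpa [EuclideanSpace.norm_single] using this

private lemma matEst {k : ℕ} (M : Matrix (Fin k) (Fin k) ℂ) (c : ℝ) (hc : 1 ≤ c)
    (hell : (Mᴴ * M - ((c : ℂ)) • 1).PosSemidef) (i j : Fin k) :
    ‖(1 + Mᴴ * M)⁻¹ i j‖ ≤ Real.sqrt (1 / c) ∧
    ‖((1 + Mᴴ * M)⁻¹ * Mᴴ) i j‖ ≤ Real.sqrt (1 / c) ∧
    ‖(M * (1 + Mᴴ * M)⁻¹) i j‖ ≤ Real.sqrt (1 / c) ∧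
    ‖(M * (1 + Mᴴ * M)⁻¹ * Mᴴ - 1) i j‖ ≤ Real.sqrt (1 / c) := by
  have hc0 : (0:ℝ) < c := lt_of_lt_of_le one_pos hc
  have hb : (Mᴴ * M).PosSemidef := posSemidef_conjTranspose_mul_self M
  have hpd : (1 + Mᴴ * M).PosDef := Matrix.PosDef.one.add_posSemidef hb
  have hdet : IsUnit (1 + Mᴴ * M).det := (Matrix.isUnit_iff_isUnit_det _).1 hpd.isUnit
  have hinv1 : (1 + Mᴴ * M) * (1 + Mᴴ * M)⁻¹ = 1 := Matrix.mul_nonsing_inv _ hdet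
  set T := Matrix.toEuclideanCLM (𝕜 := ℂ) (n := Fin k) with hT
  set A := T M with hA
  set S := T (1 + Mᴴ * M)⁻¹ with hS
  have hstar : T Mᴴ = star A := by rw [hA, ← map_star]; rfl
  have hS1 : ∀ v, S v + (star A) (A (S v)) = v := by
    intro v
    have h2 := congrArg T hinv1
    rw [_root_.map_mul, _root_.map_one, map_add, _root_.map_one, _root_.map_mul, hstar] at h2
    have h3 := DFunLike.congr_fun h2 v
    simpa [ContinuousLinearMap.mul_apply, ContinuousLinearMap.add_apply] using h3
  have hell' : ∀ x : EuclideanSpace ℂ (Fin k), c * ‖x‖ ^ 2 ≤ ‖A x‖ ^ 2 := by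
    intro x
    have h0 := hell.re_dotProduct_nonneg ((WithLp.equiv 2 _) x)
    rw [Matrix.sub_mulVec, dotProduct_sub, map_sub] at h0
    have hd1 : RCLike.re (dotProduct (star ((WithLp.equiv 2 _) x))
        ((Mᴴ * M) *ᵥ ((WithLp.equiv 2 _) x))) = ‖A x‖ ^ 2 := by
      have e1 : dotProduct (star ((WithLp.equiv 2 _) x))
          ((Mᴴ * M) *ᵥ ((WithLp.equiv 2 _) x)) = ⟪x, T (Mᴴ * M) x⟫_ℂ := by rw [dotProduct_comm]; rfl
      rw [e1, _root_.map_mul, hstar, ContinuousLinearMap.mul_apply, star_eq_adjoint,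
        adjoint_inner_right, inner_self_eq_norm_sq]
    have hd2 : RCLike.re (dotProduct (star ((WithLp.equiv 2 _) x))
        (((c : ℂ) • 1 : Matrix (Fin k) (Fin k) ℂ) *ᵥ ((WithLp.equiv 2 _) x))) = c * ‖x‖ ^ 2 := by
      rw [Matrix.smul_mulVec, Matrix.one_mulVec, dotProduct_smul]
      have e2 : dotProduct (star ((WithLp.equiv 2 _) x)) ((WithLp.equiv 2 _) x)
          = ⟪x, x⟫_ℂ := by rw [dotProduct_comm]; rfl
      rw [e2, inner_self_eq_norm_sq_to_K]
      simp [RCLike.mul_re]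
      left
      norm_cast
    rw [hd1, hd2] at h0; linarith
  obtain ⟨o1, o2, o3, o4⟩ := opEst A S c hc0 hS1 hell'
  have hs0 : (0:ℝ) ≤ Real.sqrt (1 / c) := Real.sqrt_nonneg _
  have hsle : 1 / c ≤ Real.sqrt (1 / c) := by
    have h1 : Real.sqrt (1 / c) ^ 2 = 1 / c := Real.sq_sqrt (by positivity)
    have h2 : 1 / c ≤ 1 := by
      rw [div_le_one hc0]; exact hc
    nlinarith [Real.sqrt_nonneg (1 / c)]
  refine ⟨entry_le _ _ ?_ i j, entry_le _ _ ?_ i j, entry_le _ _ ?_ i j, entry_le _ _ ?_ i j⟩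
  · intro v
    exact (o1 v).trans (mul_le_mul_of_nonneg_right hsle (norm_nonneg _))
  · intro v
    have e4 : Matrix.toEuclideanCLM (𝕜 := ℂ) ((1 + Mᴴ * M)⁻¹ * Mᴴ) v = S ((star A) v) := by
      rw [← hT, _root_.map_mul, hstar]; rfl
    rw [e4]; exact o2 v
  · intro v
    have e4 : Matrix.toEuclideanCLM (𝕜 := ℂ) (M * (1 + Mᴴ * M)⁻¹) v = A (S v) := by
      rw [← hT, _root_.map_mul]; rfl
    rw [e4]; exact o3 v
  · intro v
    have e4 : Matrix.toEuclideanCLM (𝕜 := ℂ) (M * (1 + Mᴴ * M)⁻¹ * Mᴴ - 1) v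
        = A (S ((star A) v)) - v := by
      rw [← hT, map_sub, _root_.map_one, _root_.map_mul, _root_.map_mul, hstar]; rfl
    rw [e4]
    exact (o4 v).trans (mul_le_mul_of_nonneg_right hsle (norm_nonneg _))

end Aux

/-- Let `d, k ≥ 1`, `m > 0`, `C > 0`, `R > 0`, and let
`a : ℝᵈ → M_k(ℂ)` be continuous with `a(z)ᴴa(z) − C‖z‖^{2m}·1` positive semidefinite for
`‖z‖ ≥ R` (ellipticity of positive order `m`).  Then each of the four blocks of the
truncated graph projection `ê_a(z)`, namely `(1+aᴴa)⁻¹`, `(1+aᴴa)⁻¹aᴴ`, `a(1+aᴴa)⁻¹` and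
`a(1+aᴴa)⁻¹aᴴ − 1`, tends to the zero matrix as `‖z‖ → ∞`. -/
theorem statement11 (d k : ℕ) (hd : 1 ≤ d) (hk : 1 ≤ k) (m : ℝ) (hm : 0 < m)
    (C : ℝ) (hC : 0 < C) (R : ℝ) (hR : 0 < R)
    (a : EuclideanSpace ℝ (Fin d) → Matrix (Fin k) (Fin k) ℂ)
    (ha : Continuous a)
    (hell : ∀ z : EuclideanSpace ℝ (Fin d), R ≤ ‖z‖ →
      ((a z)ᴴ * (a z) - ((C * ‖z‖ ^ (2 * m) : ℝ) : ℂ) • 1).PosSemidef) :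
    Tendsto (fun z : EuclideanSpace ℝ (Fin d) => (1 + (a z)ᴴ * (a z))⁻¹)
        (Filter.comap (fun z : EuclideanSpace ℝ (Fin d) => ‖z‖) atTop) (nhds 0) ∧
    Tendsto (fun z : EuclideanSpace ℝ (Fin d) => (1 + (a z)ᴴ * (a z))⁻¹ * (a z)ᴴ)
        (Filter.comap (fun z : EuclideanSpace ℝ (Fin d) => ‖z‖) atTop) (nhds 0) ∧
    Tendsto (fun z : EuclideanSpace ℝ (Fin d) => (a z) * (1 + (a z)ᴴ * (a z))⁻¹)
        (Filter.comap (fun z : EuclideanSpace ℝ (Fin d) => ‖z‖) atTop) (nhds 0) ∧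
    Tendsto (fun z : EuclideanSpace ℝ (Fin d) =>
          (a z) * (1 + (a z)ᴴ * (a z))⁻¹ * (a z)ᴴ - 1)
        (Filter.comap (fun z : EuclideanSpace ℝ (Fin d) => ‖z‖) atTop) (nhds 0) := by
  set l := Filter.comap (fun z : EuclideanSpace ℝ (Fin d) => ‖z‖) atTop with hl
  have hnorm : Tendsto (fun z : EuclideanSpace ℝ (Fin d) => ‖z‖) l atTop := tendsto_comap
  have hctop : Tendsto (fun z : EuclideanSpace ℝ (Fin d) => C * ‖z‖ ^ (2 * m)) l atTop := by
    have h2 : Tendsto (fun t : ℝ => C * t ^ (2 * m)) atTop atTop :=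
      (tendsto_rpow_atTop (by positivity)).const_mul_atTop hC
    exact h2.comp hnorm
  set g : EuclideanSpace ℝ (Fin d) → ℝ :=
    fun z => Real.sqrt (1 / (C * ‖z‖ ^ (2 * m))) with hg
  have hgz : Tendsto g l (nhds 0) := by
    have h1 : Tendsto (fun z : EuclideanSpace ℝ (Fin d) => 1 / (C * ‖z‖ ^ (2 * m))) l (nhds 0) := by
      simp only [one_div]
      exact tendsto_inv_atTop_zero.comp hctop
    have h2 : Tendsto Real.sqrt (nhds 0) (nhds 0) := by
      have := Real.continuous_sqrt.tendsto 0
      rwa [Real.sqrt_zero] at this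
    exact h2.comp h1
  have hevR : ∀ᶠ z in l, R ≤ ‖z‖ := hnorm.eventually (eventually_ge_atTop R)
  have hev1 : ∀ᶠ z in l, 1 ≤ C * ‖z‖ ^ (2 * m) := hctop.eventually (eventually_ge_atTop 1)
  have key : ∀ᶠ z in l, ∀ i j : Fin k,
      ‖(1 + (a z)ᴴ * (a z))⁻¹ i j‖ ≤ g z ∧
      ‖((1 + (a z)ᴴ * (a z))⁻¹ * (a z)ᴴ) i j‖ ≤ g z ∧
      ‖((a z) * (1 + (a z)ᴴ * (a z))⁻¹) i j‖ ≤ g z ∧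
      ‖((a z) * (1 + (a z)ᴴ * (a z))⁻¹ * (a z)ᴴ - 1) i j‖ ≤ g z := by
    filter_upwards [hevR, hev1] with z h1 h2
    intro i j
    exact matEst (a z) (C * ‖z‖ ^ (2 * m)) h2 (hell z h1) i j
  refine ⟨?_, ?_, ?_, ?_⟩ <;>
    · refine tendsto_pi_nhds.2 ?_
      intro i
      rw [tendsto_pi_nhds]
      intro j
      refine squeeze_zero_norm' ?_ hgz
      filter_upwards [key] with z hz
      first
        | exact (hz i j).1
        | exact (hz i j).2.1
        | exact (hz i j).2.2.1
        | exact (hz i j).2.2.2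
end

section
/- Let K ∈ 𝒮(ℝ×ℝ; ℂ) be a Schwartz kernel that is idempotent under kernel composition: ∫_ℝ K(x,y)K(y,z) dy = K(x,z) for all x, z. Define the kernels (DK)(x,y) = (∂₁K)(x,y) + (∂₂K)(x,y) and (XK)(x,y) = (x − y)K(x,y), the composition (A∘B)(x,z) = ∫_ℝ A(x,y)B(y,z) dy, and the trace Tr(A) = ∫_ℝ A(x,x) dx. Then Tr(K ∘ DK ∘ XK) − Tr(K ∘ XK ∘ DK) = −Tr(K), i.e., ∫∫∫ K(x,y)(DK)(y,z)(XK)(z,x) dz dy dx − ∫∫∫ K(x,y)(XK)(y,z)(DK)(z,x) dz dy dx = −∫ K(x,x) dx. -/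
open MeasureTheory

/-- The kernel of the commutator `[d/dx, T]`:
`(DK)(x,y) = (∂₁K)(x,y) + (∂₂K)(x,y)`. -/
noncomputable def kerD (K : ℝ × ℝ → ℂ) (p : ℝ × ℝ) : ℂ :=
  fderiv ℝ K p (1, 0) + fderiv ℝ K p (0, 1)

/-- The kernel of the commutator `[x, T]`: `(XK)(x,y) = (x − y)K(x,y)`. -/
noncomputable def kerX (K : ℝ × ℝ → ℂ) (p : ℝ × ℝ) : ℂ :=
  ((p.1 - p.2 : ℝ) : ℂ) * K p

open MeasureTheory Filter SchwartzMap

noncomputable section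

namespace S16

/-- weight -/
def P (t : ℝ) : ℝ := 1 + |t|

lemma P_pos (t : ℝ) : 0 < P t := by unfold P; positivity

lemma one_le_P (t : ℝ) : 1 ≤ P t := by unfold P; simp [abs_nonneg]

lemma abs_le_P (t : ℝ) : |t| ≤ P t := by unfold P; linarith [abs_nonneg t]

lemma P_pow_pos (t : ℝ) (k : ℕ) : 0 < P t ^ k := pow_pos (P_pos t) k

lemma one_le_P_pow (t : ℝ) (k : ℕ) : 1 ≤ P t ^ k := one_le_pow₀ (one_le_P t)

lemma inv_P_pow_le_one (t : ℝ) (k : ℕ) : (P t ^ k)⁻¹ ≤ 1 := by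
  rw [inv_le_one_iff₀]; right; exact one_le_P_pow t k

lemma inv_P_pow_nonneg (t : ℝ) (k : ℕ) : 0 ≤ (P t ^ k)⁻¹ :=
  inv_nonneg.2 (P_pow_pos t k).le

lemma inv_P_pow_anti (t : ℝ) {k l : ℕ} (h : k ≤ l) : (P t ^ l)⁻¹ ≤ (P t ^ k)⁻¹ :=
  inv_anti₀ (P_pow_pos t k) (pow_le_pow_right₀ (one_le_P t) h)

lemma abs_sub_le_P_mul (s t : ℝ) : |s - t| ≤ P s * P t := by
  have h := abs_sub s t
  unfold P
  nlinarith [abs_nonneg s, abs_nonneg t]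

/-- separated decay of Schwartz functions on `ℝ × ℝ` -/
lemma sep (f : SchwartzMap (ℝ × ℝ) ℂ) (k : ℕ) :
    ∃ C : ℝ, 0 ≤ C ∧ ∀ a b : ℝ, ‖f (a, b)‖ ≤ C * ((P a ^ k)⁻¹ * (P b ^ k)⁻¹) := by
  set C : ℝ := 2 ^ (2 * k) *
    (Finset.Iic ((2 * k, 0) : ℕ × ℕ)).sup (fun m => SchwartzMap.seminorm ℝ m.1 m.2) f with hC
  have hC0 : 0 ≤ C := by
    apply mul_nonneg (by positivity)
    exact apply_nonneg _ _
  refine ⟨C, hC0, fun a b => ?_⟩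
  have key := SchwartzMap.one_add_le_sup_seminorm_apply (𝕜 := ℝ)
    (m := ((2 * k, 0) : ℕ × ℕ)) (k := 2 * k) (n := 0) le_rfl le_rfl f (a, b)
  rw [norm_iteratedFDeriv_zero] at key
  -- (P a * P b) ^ k ≤ (1 + ‖(a,b)‖) ^ (2 * k)
  have h1 : P a * P b ≤ (1 + ‖((a, b) : ℝ × ℝ)‖) ^ 2 := by
    have hn : ‖((a, b) : ℝ × ℝ)‖ = max |a| |b| := by
      simp [Prod.norm_def, Real.norm_eq_abs]
    have ha : P a ≤ 1 + ‖((a, b) : ℝ × ℝ)‖ := by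
      rw [hn]; unfold P
      have : |a| ≤ max |a| |b| := le_max_left _ _
      linarith
    have hb : P b ≤ 1 + ‖((a, b) : ℝ × ℝ)‖ := by
      rw [hn]; unfold P
      have : |b| ≤ max |a| |b| := le_max_right _ _
      linarith
    have h0 : (0:ℝ) ≤ 1 + ‖((a, b) : ℝ × ℝ)‖ := by positivity
    calc P a * P b ≤ (1 + ‖((a, b) : ℝ × ℝ)‖) * (1 + ‖((a, b) : ℝ × ℝ)‖) := by
          exact mul_le_mul ha hb (P_pos b).le h0
      _ = (1 + ‖((a, b) : ℝ × ℝ)‖) ^ 2 := by ring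
  have h2 : P a ^ k * P b ^ k ≤ (1 + ‖((a, b) : ℝ × ℝ)‖) ^ (2 * k) := by
    calc P a ^ k * P b ^ k = (P a * P b) ^ k := (mul_pow _ _ _).symm
      _ ≤ ((1 + ‖((a, b) : ℝ × ℝ)‖) ^ 2) ^ k := by
          apply pow_le_pow_left₀ (mul_pos (P_pos a) (P_pos b)).le h1
      _ = (1 + ‖((a, b) : ℝ × ℝ)‖) ^ (2 * k) := by rw [← pow_mul]
  have h3 : ‖f (a, b)‖ * (P a ^ k * P b ^ k) ≤ C := by
    calc ‖f (a, b)‖ * (P a ^ k * P b ^ k)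
        ≤ ‖f (a, b)‖ * (1 + ‖((a, b) : ℝ × ℝ)‖) ^ (2 * k) := by
          apply mul_le_mul_of_nonneg_left h2 (norm_nonneg _)
      _ = (1 + ‖((a, b) : ℝ × ℝ)‖) ^ (2 * k) * ‖f (a, b)‖ := by ring
      _ ≤ C := key
  have hpos : (0:ℝ) < P a ^ k * P b ^ k := by
    exact mul_pos (P_pow_pos a k) (P_pow_pos b k)
  calc ‖f (a, b)‖ = ‖f (a, b)‖ * (P a ^ k * P b ^ k) * (P a ^ k * P b ^ k)⁻¹ := by
        rw [mul_inv_cancel_right₀ hpos.ne']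
    _ ≤ C * (P a ^ k * P b ^ k)⁻¹ := by
        apply mul_le_mul_of_nonneg_right h3 (by positivity)
    _ = C * ((P a ^ k)⁻¹ * (P b ^ k)⁻¹) := by rw [mul_inv]

/-! ### complex coercion helpers -/

def cc (a b : ℝ) : ℂ := (a : ℂ) - (b : ℂ)

lemma norm_cc (a b : ℝ) : ‖cc a b‖ = |a - b| := by
  rw [cc, ← Complex.ofReal_sub, Complex.norm_real, Real.norm_eq_abs]

lemma continuous_cc1 : Continuous (fun p : ℝ × ℝ => cc p.1 p.2) := by
  unfold cc; fun_prop

/-! ### integrable weights -/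

lemma wInt : Integrable (fun t : ℝ => (P t ^ 2)⁻¹) := by
  have h := integrable_one_add_norm (E := ℝ) (μ := volume) (r := 2)
    (by norm_num [Module.finrank_self])
  have hfun : (fun x : ℝ => (1 + ‖x‖) ^ (-(2:ℝ))) = fun t : ℝ => (P t ^ 2)⁻¹ := by
    funext t
    rw [show (-(2:ℝ)) = -((2:ℕ):ℝ) by norm_num, Real.rpow_neg (by positivity),
      Real.rpow_natCast]
    simp [P, Real.norm_eq_abs]
  rwa [hfun] at h

/-! ### Nice functions: continuous with all-order decay -/

def Nice1 (w : ℝ → ℂ) : Prop :=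
  Continuous w ∧ ∀ k : ℕ, ∃ C : ℝ, 0 ≤ C ∧ ∀ t, ‖w t‖ ≤ C * (P t ^ k)⁻¹

def Nice2 (w : ℝ × ℝ → ℂ) : Prop :=
  Continuous w ∧ ∀ k : ℕ, ∃ C : ℝ, 0 ≤ C ∧ ∀ a b, ‖w (a, b)‖ ≤ C * ((P a ^ k)⁻¹ * (P b ^ k)⁻¹)

lemma Nice1.mul {u v : ℝ → ℂ} (hu : Nice1 u) (hv : Nice1 v) :
    Nice1 (fun t => u t * v t) := by
  refine ⟨hu.1.mul hv.1, fun k => ?_⟩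
  obtain ⟨C, hC, hb⟩ := hu.2 k
  obtain ⟨D, hD, hb'⟩ := hv.2 0
  refine ⟨C * D, by positivity, fun t => ?_⟩
  rw [norm_mul]
  calc ‖u t‖ * ‖v t‖ ≤ (C * (P t ^ k)⁻¹) * (D * (P t ^ 0)⁻¹) :=
        mul_le_mul (hb t) (hb' t) (norm_nonneg _)
          (mul_nonneg hC (inv_P_pow_nonneg t k))
    _ = C * D * (P t ^ k)⁻¹ := by rw [pow_zero, inv_one, mul_one]; ring

lemma Nice1.add {u v : ℝ → ℂ} (hu : Nice1 u) (hv : Nice1 v) :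
    Nice1 (fun t => u t + v t) := by
  refine ⟨hu.1.add hv.1, fun k => ?_⟩
  obtain ⟨C, hC, hb⟩ := hu.2 k
  obtain ⟨D, hD, hb'⟩ := hv.2 k
  refine ⟨C + D, by positivity, fun t => ?_⟩
  calc ‖u t + v t‖ ≤ ‖u t‖ + ‖v t‖ := norm_add_le _ _
    _ ≤ C * (P t ^ k)⁻¹ + D * (P t ^ k)⁻¹ := add_le_add (hb t) (hb' t)
    _ = (C + D) * (P t ^ k)⁻¹ := by ring

lemma Nice1.poly_mul {w : ℝ → ℂ} (h : Nice1 w) {g : ℝ → ℂ} {C0 : ℝ} (hC0 : 0 ≤ C0)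
    (hgc : Continuous g) (hgb : ∀ t, ‖g t‖ ≤ C0 * P t) :
    Nice1 (fun t => g t * w t) := by
  refine ⟨hgc.mul h.1, fun k => ?_⟩
  obtain ⟨C, hC, hb⟩ := h.2 (k + 1)
  refine ⟨C0 * C, by positivity, fun t => ?_⟩
  rw [norm_mul]
  have hne : P t ≠ 0 := (P_pos t).ne'
  have key : P t * (P t ^ (k + 1))⁻¹ = (P t ^ k)⁻¹ := by
    rw [pow_succ, mul_inv, mul_comm ((P t ^ k)⁻¹), ← mul_assoc,
      mul_inv_cancel₀ hne, one_mul]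
  calc ‖g t‖ * ‖w t‖ ≤ (C0 * P t) * (C * (P t ^ (k+1))⁻¹) :=
        mul_le_mul (hgb t) (hb t) (norm_nonneg _) (mul_nonneg hC0 (P_pos t).le)
    _ = C0 * C * (P t * (P t ^ (k+1))⁻¹) := by ring
    _ = C0 * C * (P t ^ k)⁻¹ := by rw [key]

lemma nice1_left (f : SchwartzMap (ℝ × ℝ) ℂ) (a : ℝ) : Nice1 (fun t => f (a, t)) := by
  refine ⟨f.continuous.comp (continuous_const.prodMk continuous_id), fun k => ?_⟩
  obtain ⟨C, hC, hb⟩ := sep f k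
  refine ⟨C * (P a ^ k)⁻¹, mul_nonneg hC (inv_P_pow_nonneg a k), fun t => ?_⟩
  calc ‖f (a, t)‖ ≤ C * ((P a ^ k)⁻¹ * (P t ^ k)⁻¹) := hb a t
    _ = C * (P a ^ k)⁻¹ * (P t ^ k)⁻¹ := by ring

lemma nice1_right (f : SchwartzMap (ℝ × ℝ) ℂ) (b : ℝ) : Nice1 (fun t => f (t, b)) := by
  refine ⟨f.continuous.comp (continuous_id.prodMk continuous_const), fun k => ?_⟩
  obtain ⟨C, hC, hb⟩ := sep f k
  refine ⟨C * (P b ^ k)⁻¹, mul_nonneg hC (inv_P_pow_nonneg b k), fun t => ?_⟩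
  calc ‖f (t, b)‖ ≤ C * ((P t ^ k)⁻¹ * (P b ^ k)⁻¹) := hb t b
    _ = C * (P b ^ k)⁻¹ * (P t ^ k)⁻¹ := by ring

lemma Nice1.cc_left {w : ℝ → ℂ} (h : Nice1 w) (x : ℝ) :
    Nice1 (fun t => cc t x * w t) := by
  refine h.poly_mul (P_pos x).le (by unfold cc; fun_prop) fun t => ?_
  rw [norm_cc, mul_comm]
  exact abs_sub_le_P_mul t x |>.trans (by rw [mul_comm])

lemma Nice1.cc_right {w : ℝ → ℂ} (h : Nice1 w) (y : ℝ) :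
    Nice1 (fun t => cc y t * w t) := by
  refine h.poly_mul (P_pos y).le (by unfold cc; fun_prop) fun t => ?_
  rw [norm_cc]
  exact abs_sub_le_P_mul y t

lemma master1 {w : ℝ → ℂ} (h : Nice1 w) : Integrable w := by
  obtain ⟨C, hC, hb⟩ := h.2 2
  exact (wInt.const_mul C).mono' h.1.aestronglyMeasurable (ae_of_all _ fun t => hb t)

/-! ### Nice2 -/

lemma nice2_schwartz (f : SchwartzMap (ℝ × ℝ) ℂ) : Nice2 ⇑f :=
  ⟨f.continuous, fun k => sep f k⟩

lemma Nice2.swap {w : ℝ × ℝ → ℂ} (h : Nice2 w) : Nice2 (fun p => w (p.2, p.1)) := by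
  refine ⟨h.1.comp (continuous_snd.prodMk continuous_fst), fun k => ?_⟩
  obtain ⟨C, hC, hb⟩ := h.2 k
  exact ⟨C, hC, fun a b => by simpa [mul_comm] using hb b a⟩

lemma Nice2.mul {u v : ℝ × ℝ → ℂ} (hu : Nice2 u) (hv : Nice2 v) :
    Nice2 (fun p => u p * v p) := by
  refine ⟨hu.1.mul hv.1, fun k => ?_⟩
  obtain ⟨C, hC, hb⟩ := hu.2 k
  obtain ⟨D, hD, hb'⟩ := hv.2 0
  refine ⟨C * D, by positivity, fun a b => ?_⟩
  rw [norm_mul]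
  calc ‖u (a, b)‖ * ‖v (a, b)‖
      ≤ (C * ((P a ^ k)⁻¹ * (P b ^ k)⁻¹)) * (D * ((P a ^ 0)⁻¹ * (P b ^ 0)⁻¹)) :=
        mul_le_mul (hb a b) (hb' a b) (norm_nonneg _)
          (mul_nonneg hC (mul_nonneg (inv_P_pow_nonneg a k) (inv_P_pow_nonneg b k)))
    _ = C * D * ((P a ^ k)⁻¹ * (P b ^ k)⁻¹) := by
        rw [pow_zero, pow_zero, inv_one, mul_one, mul_one]; ring

lemma Nice2.poly_mul {w : ℝ × ℝ → ℂ} (h : Nice2 w) {g : ℝ × ℝ → ℂ}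
    (hgc : Continuous g) (hgb : ∀ a b, ‖g (a, b)‖ ≤ P a * P b) :
    Nice2 (fun p => g p * w p) := by
  refine ⟨hgc.mul h.1, fun k => ?_⟩
  obtain ⟨C, hC, hb⟩ := h.2 (k + 1)
  refine ⟨C, hC, fun a b => ?_⟩
  rw [norm_mul]
  have key : ∀ s : ℝ, P s * (P s ^ (k + 1))⁻¹ = (P s ^ k)⁻¹ := fun s => by
    rw [pow_succ, mul_inv, mul_comm ((P s ^ k)⁻¹), ← mul_assoc,
      mul_inv_cancel₀ (P_pos s).ne', one_mul]
  calc ‖g (a, b)‖ * ‖w (a, b)‖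
      ≤ (P a * P b) * (C * ((P a ^ (k+1))⁻¹ * (P b ^ (k+1))⁻¹)) :=
        mul_le_mul (hgb a b) (hb a b) (norm_nonneg _)
          (mul_nonneg (P_pos a).le (P_pos b).le)
    _ = C * ((P a * (P a ^ (k+1))⁻¹) * (P b * (P b ^ (k+1))⁻¹)) := by ring
    _ = C * ((P a ^ k)⁻¹ * (P b ^ k)⁻¹) := by rw [key a, key b]

lemma Nice2.cc_mul {w : ℝ × ℝ → ℂ} (h : Nice2 w) :
    Nice2 (fun p => cc p.1 p.2 * w p) := by
  refine h.poly_mul (by unfold cc; fun_prop) fun a b => ?_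
  rw [norm_cc]
  exact abs_sub_le_P_mul a b

lemma Nice2.ccswap_mul {w : ℝ × ℝ → ℂ} (h : Nice2 w) :
    Nice2 (fun p => cc p.2 p.1 * w p) := by
  refine h.poly_mul (by unfold cc; fun_prop) fun a b => ?_
  rw [norm_cc]
  exact (abs_sub_le_P_mul b a).trans (le_of_eq (mul_comm _ _))

lemma Nice2.coe1_mul {w : ℝ × ℝ → ℂ} (h : Nice2 w) :
    Nice2 (fun p => (p.1 : ℂ) * w p) := by
  refine h.poly_mul (by fun_prop) fun a b => ?_
  rw [Complex.norm_real, Real.norm_eq_abs]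
  calc |a| ≤ P a := abs_le_P a
    _ ≤ P a * P b := le_mul_of_one_le_right (P_pos a).le (one_le_P b)

lemma Nice2.coe2_mul {w : ℝ × ℝ → ℂ} (h : Nice2 w) :
    Nice2 (fun p => (p.2 : ℂ) * w p) := by
  refine h.poly_mul (by fun_prop) fun a b => ?_
  rw [Complex.norm_real, Real.norm_eq_abs]
  calc |b| ≤ P b := abs_le_P b
    _ ≤ P a * P b := le_mul_of_one_le_left (P_pos b).le (one_le_P a)

lemma master2 {w : ℝ × ℝ → ℂ} (h : Nice2 w) : Integrable w := by
  obtain ⟨C, hC, hb⟩ := h.2 2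
  have hg : Integrable (fun p : ℝ × ℝ => C * ((P p.1 ^ 2)⁻¹ * (P p.2 ^ 2)⁻¹)) :=
    (wInt.mul_prod wInt).const_mul C
  exact hg.mono' h.1.aestronglyMeasurable (ae_of_all _ fun p => hb p.1 p.2)

/-! ### master integrability on ℝ³ -/

lemma master3_mk {f g h : ℝ × ℝ → ℂ} (hf : Nice2 f) (hg : Nice2 g) (hh : Nice2 h) :
    Integrable (fun p : ℝ × ℝ × ℝ => f (p.1, p.2.1) * g (p.2.1, p.2.2) * h (p.2.2, p.1)) := by
  obtain ⟨Cf, hCf, hbf⟩ := hf.2 2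
  obtain ⟨Cg, hCg, hbg⟩ := hg.2 2
  obtain ⟨Ch, hCh, hbh⟩ := hh.2 2
  have hgint : Integrable
      (fun p : ℝ × ℝ × ℝ => Cf * Cg * Ch * ((P p.1 ^ 2)⁻¹ * ((P p.2.1 ^ 2)⁻¹ * (P p.2.2 ^ 2)⁻¹))) :=
    (wInt.mul_prod (wInt.mul_prod wInt)).const_mul _
  have hcont : Continuous
      (fun p : ℝ × ℝ × ℝ => f (p.1, p.2.1) * g (p.2.1, p.2.2) * h (p.2.2, p.1)) := by
    refine ((hf.1.comp ?_).mul (hg.1.comp ?_)).mul (hh.1.comp ?_) <;> fun_prop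
  refine hgint.mono' hcont.aestronglyMeasurable (ae_of_all _ fun p => ?_)
  obtain ⟨a, b, c⟩ := p
  set x := (P a ^ 2)⁻¹ with hx
  set y := (P b ^ 2)⁻¹ with hy
  set z := (P c ^ 2)⁻¹ with hz
  have hx0 : 0 ≤ x := inv_P_pow_nonneg a 2
  have hy0 : 0 ≤ y := inv_P_pow_nonneg b 2
  have hz0 : 0 ≤ z := inv_P_pow_nonneg c 2
  have hx1 : x ≤ 1 := inv_P_pow_le_one a 2
  have hy1 : y ≤ 1 := inv_P_pow_le_one b 2
  have hz1 : z ≤ 1 := inv_P_pow_le_one c 2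
  calc ‖f (a, b) * g (b, c) * h (c, a)‖
      = ‖f (a, b)‖ * ‖g (b, c)‖ * ‖h (c, a)‖ := by rw [norm_mul, norm_mul]
    _ ≤ (Cf * (x * y)) * (Cg * (y * z)) * (Ch * (z * x)) := by
        refine mul_le_mul (mul_le_mul (hbf a b) (hbg b c) (norm_nonneg _)
          (mul_nonneg hCf (mul_nonneg hx0 hy0)))
          (hbh c a) (norm_nonneg _)
          (mul_nonneg (mul_nonneg hCf (mul_nonneg hx0 hy0))
            (mul_nonneg hCg (mul_nonneg hy0 hz0)))
    _ = (Cf * Cg * Ch) * ((x * (y * z)) * (x * (y * z))) := by ring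
    _ ≤ (Cf * Cg * Ch) * ((x * (y * z)) * 1) := by
        refine mul_le_mul_of_nonneg_left
          (mul_le_mul_of_nonneg_left ?_ (mul_nonneg hx0 (mul_nonneg hy0 hz0)))
          (mul_nonneg (mul_nonneg hCf hCg) hCh)
        exact mul_le_one₀ hx1 (mul_nonneg hy0 hz0) (mul_le_one₀ hy1 hz0 hz1)
    _ = Cf * Cg * Ch * (x * (y * z)) := by ring

/-! ### Fubini: iterated = joint -/

lemma iter2 {w : ℝ × ℝ → ℂ} (hw : Integrable w) :
    (∫ a : ℝ, ∫ b : ℝ, w (a, b)) = ∫ p : ℝ × ℝ, w p :=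
  integral_integral (f := fun a b => w (a, b)) hw

lemma iter3 (w : ℝ → ℝ → ℝ → ℂ)
    (hw : Integrable (fun p : ℝ × ℝ × ℝ => w p.1 p.2.1 p.2.2)) :
    (∫ a : ℝ, ∫ b : ℝ, ∫ c : ℝ, w a b c) = ∫ p : ℝ × ℝ × ℝ, w p.1 p.2.1 p.2.2 := by
  have hw' : Integrable (Function.uncurry fun a (q : ℝ × ℝ) => w a q.1 q.2)
      ((volume : Measure ℝ).prod (volume : Measure (ℝ × ℝ))) := hw
  have h1 : ∀ᵐ a : ℝ, Integrable (fun q : ℝ × ℝ => w a q.1 q.2) volume :=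
    hw'.prod_right_ae
  calc (∫ a : ℝ, ∫ b : ℝ, ∫ c : ℝ, w a b c)
      = ∫ a : ℝ, ∫ q : ℝ × ℝ, w a q.1 q.2 := by
        apply integral_congr_ae
        filter_upwards [h1] with a ha
        exact iter2 (w := fun q : ℝ × ℝ => w a q.1 q.2) ha
    _ = ∫ p : ℝ × ℝ × ℝ, w p.1 p.2.1 p.2.2 := integral_integral hw'

/-! ### permutations -/

lemma perm_cycle (f : ℝ → ℝ → ℝ → ℂ) :
    (∫ p : ℝ × ℝ × ℝ, f p.2.1 p.2.2 p.1) = ∫ p : ℝ × ℝ × ℝ, f p.1 p.2.1 p.2.2 := by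
  have hswap : MeasurePreserving (Prod.swap : ℝ × (ℝ × ℝ) → (ℝ × ℝ) × ℝ)
      volume volume := Measure.measurePreserving_swap
  have hassoc : MeasurePreserving
      (MeasurableEquiv.prodAssoc : (ℝ × ℝ) × ℝ ≃ᵐ ℝ × ℝ × ℝ) volume volume :=
    volume_preserving_prodAssoc
  have hmp : MeasurePreserving
      (⇑((MeasurableEquiv.prodComm : ℝ × (ℝ × ℝ) ≃ᵐ (ℝ × ℝ) × ℝ).trans
        MeasurableEquiv.prodAssoc))
      volume volume := hassoc.comp hswap
  exact hmp.integral_comp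
    ((MeasurableEquiv.prodComm : ℝ × (ℝ × ℝ) ≃ᵐ (ℝ × ℝ) × ℝ).trans
      MeasurableEquiv.prodAssoc).measurableEmbedding
    (fun p => f p.1 p.2.1 p.2.2)

lemma perm_cycle' (f : ℝ → ℝ → ℝ → ℂ) :
    (∫ p : ℝ × ℝ × ℝ, f p.2.2 p.1 p.2.1) = ∫ p : ℝ × ℝ × ℝ, f p.1 p.2.1 p.2.2 :=
  (perm_cycle (fun a b c => f c a b)).symm

lemma perm_swap2 (g : ℝ → ℝ → ℂ) :
    (∫ p : ℝ × ℝ, g p.2 p.1) = ∫ p : ℝ × ℝ, g p.1 p.2 :=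
  integral_prod_swap (fun z : ℝ × ℝ => g z.1 z.2)

/-! ### integration by parts -/

lemma ibp {u v u' v' : ℝ → ℂ} (hu : ∀ t, HasDerivAt u (u' t) t)
    (hv : ∀ t, HasDerivAt v (v' t) t)
    (nu : Nice1 u) (nv : Nice1 v) (nu' : Nice1 u') (nv' : Nice1 v') :
    (∫ t, u t * v' t) = - ∫ t, u' t * v t :=
  integral_mul_deriv_eq_deriv_mul_of_integrable (fun t _ => hu t) (fun t _ => hv t)
    (master1 (nu.mul nv')) (master1 (nu'.mul nv)) (master1 (nu.mul nv))

/-! ### derivatives of slices -/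

lemma hasDerivAt_coe (t : ℝ) : HasDerivAt (fun s : ℝ => (s : ℂ)) 1 t := by
  simpa using (hasDerivAt_id t).ofReal_comp

lemma hasDerivAt_cc_left (x t : ℝ) : HasDerivAt (fun s => cc s x) 1 t := by
  simpa [cc] using (hasDerivAt_coe t).sub_const ((x : ℝ) : ℂ)

lemma hasDerivAt_cc_right (y t : ℝ) : HasDerivAt (fun s => cc y s) (-1) t := by
  simpa [cc] using (hasDerivAt_coe t).const_sub ((y : ℝ) : ℂ)

lemma hd_fst (f : SchwartzMap (ℝ × ℝ) ℂ) (b t : ℝ) :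
    HasDerivAt (fun s => f (s, b)) (LineDeriv.lineDerivOpCLM ℝ (SchwartzMap (ℝ × ℝ) ℂ) ((1 : ℝ), (0 : ℝ)) f (t, b)) t := by
  have h1 : HasFDerivAt f (fderiv ℝ f (t, b)) (t, b) :=
    (f.differentiable.differentiableAt).hasFDerivAt
  have h2 : HasDerivAt (fun s : ℝ => ((s, b) : ℝ × ℝ)) (((1 : ℝ), (0 : ℝ)) : ℝ × ℝ) t :=
    (hasDerivAt_id t).prodMk (hasDerivAt_const t b)
  have h3 := h1.comp_hasDerivAt t h2
  simpa [LineDeriv.lineDerivOpCLM_apply, SchwartzMap.lineDerivOp_apply_eq_fderiv, Function.comp_def] using h3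

lemma hd_snd (f : SchwartzMap (ℝ × ℝ) ℂ) (a t : ℝ) :
    HasDerivAt (fun s => f (a, s)) (LineDeriv.lineDerivOpCLM ℝ (SchwartzMap (ℝ × ℝ) ℂ) ((0 : ℝ), (1 : ℝ)) f (a, t)) t := by
  have h1 : HasFDerivAt f (fderiv ℝ f (a, t)) (a, t) :=
    (f.differentiable.differentiableAt).hasFDerivAt
  have h2 : HasDerivAt (fun s : ℝ => ((a, s) : ℝ × ℝ)) (((0 : ℝ), (1 : ℝ)) : ℝ × ℝ) t :=
    (hasDerivAt_const t a).prodMk (hasDerivAt_id t)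
  have h3 := h1.comp_hasDerivAt t h2
  simpa [LineDeriv.lineDerivOpCLM_apply, SchwartzMap.lineDerivOp_apply_eq_fderiv, Function.comp_def] using h3


lemma Nice1.neg {u : ℝ → ℂ} (h : Nice1 u) : Nice1 (fun t => -u t) := by
  refine ⟨h.1.neg, fun k => ?_⟩
  obtain ⟨C, h0, hb⟩ := h.2 k
  exact ⟨C, h0, fun t => by rw [norm_neg]; exact hb t⟩

lemma perm_swap23 (f : ℝ → ℝ → ℝ → ℂ) :
    (∫ p : ℝ × ℝ × ℝ, f p.1 p.2.2 p.2.1) = ∫ p : ℝ × ℝ × ℝ, f p.1 p.2.1 p.2.2 := by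
  have hmp : MeasurePreserving
      (⇑((MeasurableEquiv.refl ℝ).prodCongr
        (MeasurableEquiv.prodComm : ℝ × ℝ ≃ᵐ ℝ × ℝ))) volume volume := by
    have h := (MeasurePreserving.id (volume : Measure ℝ)).prod
      (Measure.measurePreserving_swap (μ := (volume : Measure ℝ)) (ν := (volume : Measure ℝ)))
    exact h
  exact hmp.integral_comp
    ((MeasurableEquiv.refl ℝ).prodCongr
      (MeasurableEquiv.prodComm : ℝ × ℝ ≃ᵐ ℝ × ℝ)).measurableEmbedding
    (fun p => f p.1 p.2.1 p.2.2)

/-! ### the kernel and its partial derivatives -/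

variable (K : SchwartzMap (ℝ × ℝ) ℂ)

def D1 : SchwartzMap (ℝ × ℝ) ℂ := LineDeriv.lineDerivOpCLM ℝ (SchwartzMap (ℝ × ℝ) ℂ) ((1 : ℝ), (0 : ℝ)) K

def D2 : SchwartzMap (ℝ × ℝ) ℂ := LineDeriv.lineDerivOpCLM ℝ (SchwartzMap (ℝ × ℝ) ℂ) ((0 : ℝ), (1 : ℝ)) K

lemma hdK1 (b t : ℝ) : HasDerivAt (fun s => K (s, b)) (D1 K (t, b)) t := hd_fst K b t

lemma hdK2 (a t : ℝ) : HasDerivAt (fun s => K (a, s)) (D2 K (a, t)) t := hd_snd K a t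

/-! ### the four integration-by-parts identities -/

lemma ibpA2 (x y : ℝ) :
    (∫ z : ℝ, K (y, z) * (K (z, x) + cc z x * D1 K (z, x)))
      = - ∫ z : ℝ, D2 K (y, z) * (cc z x * K (z, x)) := by
  have hu : ∀ t : ℝ, HasDerivAt (fun s => K (y, s)) (D2 K (y, t)) t := fun t => hdK2 K y t
  have hv : ∀ t : ℝ, HasDerivAt (fun s => cc s x * K (s, x))
      (K (t, x) + cc t x * D1 K (t, x)) t := fun t => by
    have h := (hasDerivAt_cc_left x t).mul (hdK1 K x t)
    simpa [one_mul, Pi.mul_def] using h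
  exact ibp hu hv (nice1_left K y) ((nice1_right K x).cc_left x)
    (nice1_left (D2 K) y)
    ((nice1_right K x).add ((nice1_right (D1 K) x).cc_left x))

lemma ibpB (a : ℝ) :
    (∫ b : ℝ, (cc b a * K (a, b)) * D1 K (b, a))
      = - ∫ b : ℝ, (K (a, b) + cc b a * D2 K (a, b)) * K (b, a) := by
  have hu : ∀ t : ℝ, HasDerivAt (fun s => cc s a * K (a, s))
      (K (a, t) + cc t a * D2 K (a, t)) t := fun t => by
    have h := (hasDerivAt_cc_left a t).mul (hdK2 K a t)
    simpa [one_mul, Pi.mul_def] using h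
  have hv : ∀ t : ℝ, HasDerivAt (fun s => K (s, a)) (D1 K (t, a)) t := fun t => hdK1 K a t
  exact ibp hu hv ((nice1_left K a).cc_left a) (nice1_right K a)
    ((nice1_left K a).add ((nice1_left (D2 K) a).cc_left a))
    (nice1_right (D1 K) a)

lemma ibpC1 (x y : ℝ) :
    (∫ z : ℝ, (cc y z * K (y, z)) * D1 K (z, x))
      = - ∫ z : ℝ, (-K (y, z) + cc y z * D2 K (y, z)) * K (z, x) := by
  have hu : ∀ t : ℝ, HasDerivAt (fun s => cc y s * K (y, s))
      (-K (y, t) + cc y t * D2 K (y, t)) t := fun t => by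
    have h := (hasDerivAt_cc_right y t).mul (hdK2 K y t)
    simpa [neg_one_mul, Pi.mul_def] using h
  have hv : ∀ t : ℝ, HasDerivAt (fun s => K (s, x)) (D1 K (t, x)) t := fun t => hdK1 K x t
  exact ibp hu hv ((nice1_left K y).cc_right y) (nice1_right K x)
    (((nice1_left K y).neg).add ((nice1_left (D2 K) y).cc_right y))
    (nice1_right (D1 K) x)

lemma ibpD (a b : ℝ) :
    (∫ c : ℝ, K (b, c) * D1 K (c, a)) = - ∫ c : ℝ, D2 K (b, c) * K (c, a) := by
  have hu : ∀ t : ℝ, HasDerivAt (fun s => K (b, s)) (D2 K (b, t)) t := fun t => hdK2 K b t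
  have hv : ∀ t : ℝ, HasDerivAt (fun s => K (s, a)) (D1 K (t, a)) t := fun t => hdK1 K a t
  exact ibp hu hv (nice1_left K b) (nice1_right K a)
    (nice1_left (D2 K) b) (nice1_right (D1 K) a)


/-! ### the integrands -/

def fA1 (x y z : ℝ) : ℂ := K (x, y) * D1 K (y, z) * (cc z x * K (z, x))
def fA2 (x y z : ℝ) : ℂ := K (x, y) * D2 K (y, z) * (cc z x * K (z, x))
def ft1 (x y z : ℝ) : ℂ := K (x, y) * (K (y, z) * K (z, x))
def ft2 (x y z : ℝ) : ℂ := K (x, y) * K (y, z) * (cc z x * D1 K (z, x))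
def fC1 (x y z : ℝ) : ℂ := K (x, y) * (cc y z * K (y, z)) * D1 K (z, x)
def fC2 (x y z : ℝ) : ℂ := K (x, y) * (cc y z * K (y, z)) * D2 K (z, x)
def fE (x y z : ℝ) : ℂ := K (x, y) * (cc y z * D2 K (y, z)) * K (z, x)
def fP (x y z : ℝ) : ℂ := K (x, y) * D1 K (y, z) * ((z : ℂ) * K (z, x))
def fQ (x y z : ℝ) : ℂ := K (x, y) * D1 K (y, z) * ((x : ℂ) * K (z, x))
def fH (x y z : ℝ) : ℂ := (cc x y * K (x, y)) * K (y, z) * D1 K (z, x)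
def fHQ (x y z : ℝ) : ℂ := ((y : ℂ) * K (x, y)) * D2 K (y, z) * K (z, x)
def gB (a b : ℝ) : ℂ := K (a, b) * (cc b a * D1 K (b, a))
def gB' (a b : ℝ) : ℂ := cc b a * (D2 K (a, b) * K (b, a))
def gtr (a b : ℝ) : ℂ := K (a, b) * K (b, a)
def gR (a b : ℝ) : ℂ := (a : ℂ) * (D2 K (a, b) * K (b, a))
def gP2 (a b : ℝ) : ℂ := (b : ℂ) * (D1 K (a, b) * K (b, a))

/-! ### integrability instances -/

lemma I_fA1 : Integrable (fun p : ℝ × ℝ × ℝ => fA1 K p.1 p.2.1 p.2.2) :=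
  (master3_mk (nice2_schwartz K) (nice2_schwartz (D1 K)) ((nice2_schwartz K).cc_mul)).congr
    (ae_of_all _ fun p => by simp only [fA1])

lemma I_fA2 : Integrable (fun p : ℝ × ℝ × ℝ => fA2 K p.1 p.2.1 p.2.2) :=
  (master3_mk (nice2_schwartz K) (nice2_schwartz (D2 K)) ((nice2_schwartz K).cc_mul)).congr
    (ae_of_all _ fun p => by simp only [fA2])

lemma I_ft1 : Integrable (fun p : ℝ × ℝ × ℝ => ft1 K p.1 p.2.1 p.2.2) :=
  (master3_mk (nice2_schwartz K) (nice2_schwartz K) (nice2_schwartz K)).congr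
    (ae_of_all _ fun p => by simp only [ft1]; ring)

lemma I_ft2 : Integrable (fun p : ℝ × ℝ × ℝ => ft2 K p.1 p.2.1 p.2.2) :=
  (master3_mk (nice2_schwartz K) (nice2_schwartz K) ((nice2_schwartz (D1 K)).cc_mul)).congr
    (ae_of_all _ fun p => by simp only [ft2])

lemma I_fC1 : Integrable (fun p : ℝ × ℝ × ℝ => fC1 K p.1 p.2.1 p.2.2) :=
  (master3_mk (nice2_schwartz K) ((nice2_schwartz K).cc_mul) (nice2_schwartz (D1 K))).congr
    (ae_of_all _ fun p => by simp only [fC1])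

lemma I_fC2 : Integrable (fun p : ℝ × ℝ × ℝ => fC2 K p.1 p.2.1 p.2.2) :=
  (master3_mk (nice2_schwartz K) ((nice2_schwartz K).cc_mul) (nice2_schwartz (D2 K))).congr
    (ae_of_all _ fun p => by simp only [fC2])

lemma I_fE : Integrable (fun p : ℝ × ℝ × ℝ => fE K p.1 p.2.1 p.2.2) :=
  (master3_mk (nice2_schwartz K) ((nice2_schwartz (D2 K)).cc_mul) (nice2_schwartz K)).congr
    (ae_of_all _ fun p => by simp only [fE])

lemma I_fP : Integrable (fun p : ℝ × ℝ × ℝ => fP K p.1 p.2.1 p.2.2) :=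
  (master3_mk (nice2_schwartz K) (nice2_schwartz (D1 K)) ((nice2_schwartz K).coe1_mul)).congr
    (ae_of_all _ fun p => by simp only [fP])

lemma I_fQ : Integrable (fun p : ℝ × ℝ × ℝ => fQ K p.1 p.2.1 p.2.2) :=
  (master3_mk (nice2_schwartz K) (nice2_schwartz (D1 K)) ((nice2_schwartz K).coe2_mul)).congr
    (ae_of_all _ fun p => by simp only [fQ])

lemma I_fH : Integrable (fun p : ℝ × ℝ × ℝ => fH K p.1 p.2.1 p.2.2) :=
  (master3_mk ((nice2_schwartz K).cc_mul) (nice2_schwartz K) (nice2_schwartz (D1 K))).congr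
    (ae_of_all _ fun p => by simp only [fH])

lemma I_fHQ : Integrable (fun p : ℝ × ℝ × ℝ => fHQ K p.1 p.2.1 p.2.2) :=
  (master3_mk ((nice2_schwartz K).coe2_mul) (nice2_schwartz (D2 K)) (nice2_schwartz K)).congr
    (ae_of_all _ fun p => by simp only [fHQ])

lemma I_gB : Integrable (fun p : ℝ × ℝ => gB K p.1 p.2) :=
  (master2 ((nice2_schwartz K).mul (((nice2_schwartz (D1 K)).swap).ccswap_mul))).congr
    (ae_of_all _ fun p => by simp only [gB])

lemma I_gB' : Integrable (fun p : ℝ × ℝ => gB' K p.1 p.2) :=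
  (master2 (((nice2_schwartz (D2 K)).mul ((nice2_schwartz K).swap)).ccswap_mul)).congr
    (ae_of_all _ fun p => by simp only [gB'])

lemma I_gtr : Integrable (fun p : ℝ × ℝ => gtr K p.1 p.2) :=
  (master2 ((nice2_schwartz K).mul ((nice2_schwartz K).swap))).congr
    (ae_of_all _ fun p => by simp only [gtr])

lemma I_gR : Integrable (fun p : ℝ × ℝ => gR K p.1 p.2) :=
  (master2 (((nice2_schwartz (D2 K)).mul ((nice2_schwartz K).swap)).coe1_mul)).congr
    (ae_of_all _ fun p => by simp only [gR])

lemma I_gP2 : Integrable (fun p : ℝ × ℝ => gP2 K p.1 p.2) :=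
  (master2 (((nice2_schwartz (D1 K)).mul ((nice2_schwartz K).swap)).coe2_mul)).congr
    (ae_of_all _ fun p => by simp only [gP2])


/-! ### step lemmas -/

variable {K}

lemma step_ht1 (hK : ∀ x z : ℝ, (∫ y : ℝ, K (x, y) * K (y, z)) = K (x, z)) :
    (∫ p : ℝ × ℝ × ℝ, ft1 K p.1 p.2.1 p.2.2) = ∫ x : ℝ, K (x, x) := by
  have hIrev : Integrable (fun p : ℝ × ℝ × ℝ => ft1 K p.1 p.2.2 p.2.1) :=
    (master3_mk ((nice2_schwartz K).swap) ((nice2_schwartz K).swap)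
      ((nice2_schwartz K).swap)).congr
      (ae_of_all _ fun p => by simp only [ft1]; ring)
  have inner : ∀ a b : ℝ, (∫ c : ℝ, ft1 K a c b) = K (a, b) * K (b, a) := fun a b => by
    have h1 : (fun c => ft1 K a c b) = fun c => K (a, c) * K (c, b) * K (b, a) := by
      funext c; simp only [ft1]; ring
    rw [h1, integral_mul_const, hK a b]
  calc (∫ p : ℝ × ℝ × ℝ, ft1 K p.1 p.2.1 p.2.2)
      = ∫ p : ℝ × ℝ × ℝ, ft1 K p.1 p.2.2 p.2.1 :=
        perm_swap23 (fun a b c => ft1 K a c b)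
    _ = ∫ a : ℝ, ∫ b : ℝ, ∫ c : ℝ, ft1 K a c b :=
        (iter3 (fun a b c => ft1 K a c b) hIrev).symm
    _ = ∫ a : ℝ, ∫ b : ℝ, K (a, b) * K (b, a) := by simp only [inner]
    _ = ∫ a : ℝ, K (a, a) := by simp only [hK]

lemma step_ht2 (hK : ∀ x z : ℝ, (∫ y : ℝ, K (x, y) * K (y, z)) = K (x, z)) :
    (∫ p : ℝ × ℝ × ℝ, ft2 K p.1 p.2.1 p.2.2) = ∫ p : ℝ × ℝ, gB K p.1 p.2 := by
  have hIrev : Integrable (fun p : ℝ × ℝ × ℝ => ft2 K p.1 p.2.2 p.2.1) :=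
    (master3_mk (((nice2_schwartz (D1 K)).swap).ccswap_mul) ((nice2_schwartz K).swap)
      ((nice2_schwartz K).swap)).congr
      (ae_of_all _ fun p => by simp only [ft2]; ring)
  have inner : ∀ a b : ℝ, (∫ c : ℝ, ft2 K a c b) = gB K a b := fun a b => by
    have h1 : (fun c => ft2 K a c b)
        = fun c => K (a, c) * K (c, b) * (cc b a * D1 K (b, a)) := by
      funext c; simp only [ft2]
    rw [h1, integral_mul_const, hK a b]
    simp only [gB]
  calc (∫ p : ℝ × ℝ × ℝ, ft2 K p.1 p.2.1 p.2.2)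
      = ∫ p : ℝ × ℝ × ℝ, ft2 K p.1 p.2.2 p.2.1 :=
        perm_swap23 (fun a b c => ft2 K a c b)
    _ = ∫ a : ℝ, ∫ b : ℝ, ∫ c : ℝ, ft2 K a c b :=
        (iter3 (fun a b c => ft2 K a c b) hIrev).symm
    _ = ∫ a : ℝ, ∫ b : ℝ, gB K a b := by simp only [inner]
    _ = ∫ p : ℝ × ℝ, gB K p.1 p.2 := iter2 (I_gB K)

lemma step_hB :
    (∫ p : ℝ × ℝ, gB K p.1 p.2)
      = -(∫ p : ℝ × ℝ, gB' K p.1 p.2) - ∫ p : ℝ × ℝ, gtr K p.1 p.2 := by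
  have hsum : Integrable (fun p : ℝ × ℝ => -(gB' K p.1 p.2) - gtr K p.1 p.2) :=
    ((I_gB' K).neg).sub (I_gtr K)
  have inner : ∀ a : ℝ, (∫ b : ℝ, gB K a b) = ∫ b : ℝ, (-(gB' K a b) - gtr K a b) :=
    fun a => by
    have h1 : (fun b => gB K a b) = fun b => (cc b a * K (a, b)) * D1 K (b, a) := by
      funext b; simp only [gB]; ring
    have h2 : (fun b : ℝ => -(gB' K a b) - gtr K a b)
        = fun b : ℝ => -((K (a, b) + cc b a * D2 K (a, b)) * K (b, a)) := by
      funext b; simp only [gB', gtr]; ring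
    rw [h1, h2, ibpB K a, ← integral_neg]
  calc (∫ p : ℝ × ℝ, gB K p.1 p.2)
      = ∫ a : ℝ, ∫ b : ℝ, gB K a b := (iter2 (I_gB K)).symm
    _ = ∫ a : ℝ, ∫ b : ℝ, (-(gB' K a b) - gtr K a b) := by simp only [inner]
    _ = ∫ p : ℝ × ℝ, (-(gB' K p.1 p.2) - gtr K p.1 p.2) := iter2 hsum
    _ = -(∫ p : ℝ × ℝ, gB' K p.1 p.2) - ∫ p : ℝ × ℝ, gtr K p.1 p.2 := by
        have hneg : Integrable (fun p : ℝ × ℝ => -(gB' K p.1 p.2)) := (I_gB' K).neg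
        rw [integral_sub hneg (I_gtr K), integral_neg]

lemma step_htr (hK : ∀ x z : ℝ, (∫ y : ℝ, K (x, y) * K (y, z)) = K (x, z)) :
    (∫ p : ℝ × ℝ, gtr K p.1 p.2) = ∫ x : ℝ, K (x, x) := by
  calc (∫ p : ℝ × ℝ, gtr K p.1 p.2)
      = ∫ a : ℝ, ∫ b : ℝ, gtr K a b := (iter2 (I_gtr K)).symm
    _ = ∫ a : ℝ, K (a, a) := by simp only [gtr, hK]

lemma step_hA2 :
    (∫ p : ℝ × ℝ × ℝ, fA2 K p.1 p.2.1 p.2.2)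
      = -(∫ p : ℝ × ℝ × ℝ, ft1 K p.1 p.2.1 p.2.2)
        - ∫ p : ℝ × ℝ × ℝ, ft2 K p.1 p.2.1 p.2.2 := by
  have hsum : Integrable (fun p : ℝ × ℝ × ℝ =>
      -(ft1 K p.1 p.2.1 p.2.2) - ft2 K p.1 p.2.1 p.2.2) :=
    ((I_ft1 K).neg).sub (I_ft2 K)
  have inner : ∀ x y : ℝ, (∫ z : ℝ, fA2 K x y z)
      = ∫ z : ℝ, (-(ft1 K x y z) - ft2 K x y z) := fun x y => by
    have h1 : (fun z => fA2 K x y z)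
        = fun z => K (x, y) * (D2 K (y, z) * (cc z x * K (z, x))) := by
      funext z; simp only [fA2]; ring
    have h2 : (fun z : ℝ => -(ft1 K x y z) - ft2 K x y z)
        = fun z : ℝ => (-K (x, y)) * (K (y, z) * (K (z, x) + cc z x * D1 K (z, x))) := by
      funext z; simp only [ft1, ft2]; ring
    rw [h1, h2, integral_const_mul, integral_const_mul, ibpA2 K x y]
    ring
  calc (∫ p : ℝ × ℝ × ℝ, fA2 K p.1 p.2.1 p.2.2)
      = ∫ x : ℝ, ∫ y : ℝ, ∫ z : ℝ, fA2 K x y z := (iter3 (fA2 K) (I_fA2 K)).symm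
    _ = ∫ x : ℝ, ∫ y : ℝ, ∫ z : ℝ, (-(ft1 K x y z) - ft2 K x y z) := by simp only [inner]
    _ = ∫ p : ℝ × ℝ × ℝ, (-(ft1 K p.1 p.2.1 p.2.2) - ft2 K p.1 p.2.1 p.2.2) :=
        iter3 (fun x y z => -(ft1 K x y z) - ft2 K x y z) hsum
    _ = -(∫ p : ℝ × ℝ × ℝ, ft1 K p.1 p.2.1 p.2.2) - ∫ p : ℝ × ℝ × ℝ, ft2 K p.1 p.2.1 p.2.2 := by
        have hneg : Integrable (fun p : ℝ × ℝ × ℝ => -(ft1 K p.1 p.2.1 p.2.2)) := (I_ft1 K).neg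
        rw [integral_sub hneg (I_ft2 K), integral_neg]

lemma step_hC1 :
    (∫ p : ℝ × ℝ × ℝ, fC1 K p.1 p.2.1 p.2.2)
      = (∫ p : ℝ × ℝ × ℝ, ft1 K p.1 p.2.1 p.2.2)
        - ∫ p : ℝ × ℝ × ℝ, fE K p.1 p.2.1 p.2.2 := by
  have hsum : Integrable (fun p : ℝ × ℝ × ℝ =>
      ft1 K p.1 p.2.1 p.2.2 - fE K p.1 p.2.1 p.2.2) := (I_ft1 K).sub (I_fE K)
  have inner : ∀ x y : ℝ, (∫ z : ℝ, fC1 K x y z)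
      = ∫ z : ℝ, (ft1 K x y z - fE K x y z) := fun x y => by
    have h1 : (fun z => fC1 K x y z)
        = fun z => K (x, y) * ((cc y z * K (y, z)) * D1 K (z, x)) := by
      funext z; simp only [fC1]; ring
    have h2 : (fun z : ℝ => ft1 K x y z - fE K x y z)
        = fun z : ℝ => (-K (x, y)) * ((-K (y, z) + cc y z * D2 K (y, z)) * K (z, x)) := by
      funext z; simp only [ft1, fE]; ring
    rw [h1, h2, integral_const_mul, integral_const_mul, ibpC1 K x y]
    ring
  calc (∫ p : ℝ × ℝ × ℝ, fC1 K p.1 p.2.1 p.2.2)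
      = ∫ x : ℝ, ∫ y : ℝ, ∫ z : ℝ, fC1 K x y z := (iter3 (fC1 K) (I_fC1 K)).symm
    _ = ∫ x : ℝ, ∫ y : ℝ, ∫ z : ℝ, (ft1 K x y z - fE K x y z) := by simp only [inner]
    _ = ∫ p : ℝ × ℝ × ℝ, (ft1 K p.1 p.2.1 p.2.2 - fE K p.1 p.2.1 p.2.2) :=
        iter3 (fun x y z => ft1 K x y z - fE K x y z) hsum
    _ = (∫ p : ℝ × ℝ × ℝ, ft1 K p.1 p.2.1 p.2.2) - ∫ p : ℝ × ℝ × ℝ, fE K p.1 p.2.1 p.2.2 :=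
        integral_sub (I_ft1 K) (I_fE K)

lemma step_hE (hK : ∀ x z : ℝ, (∫ y : ℝ, K (x, y) * K (y, z)) = K (x, z)) :
    (∫ p : ℝ × ℝ × ℝ, fE K p.1 p.2.1 p.2.2) = -(∫ p : ℝ × ℝ, gB' K p.1 p.2) := by
  have hIrev : Integrable (fun p : ℝ × ℝ × ℝ => fE K p.2.2 p.1 p.2.1) :=
    (master3_mk ((nice2_schwartz (D2 K)).cc_mul) (nice2_schwartz K)
      (nice2_schwartz K)).congr
      (ae_of_all _ fun p => by simp only [fE]; ring)
  have hneg : Integrable (fun p : ℝ × ℝ => -(gB' K p.1 p.2)) := (I_gB' K).neg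
  have inner : ∀ a b : ℝ, (∫ c : ℝ, fE K c a b) = -(gB' K a b) := fun a b => by
    have h1 : (fun c => fE K c a b)
        = fun c => (cc a b * D2 K (a, b)) * (K (b, c) * K (c, a)) := by
      funext c; simp only [fE]; ring
    rw [h1, integral_const_mul, hK b a]
    simp only [gB', cc]; ring
  calc (∫ p : ℝ × ℝ × ℝ, fE K p.1 p.2.1 p.2.2)
      = ∫ p : ℝ × ℝ × ℝ, fE K p.2.2 p.1 p.2.1 := (perm_cycle' (fE K)).symm
    _ = ∫ a : ℝ, ∫ b : ℝ, ∫ c : ℝ, fE K c a b :=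
        (iter3 (fun a b c => fE K c a b) hIrev).symm
    _ = ∫ a : ℝ, ∫ b : ℝ, -(gB' K a b) := by simp only [inner]
    _ = ∫ p : ℝ × ℝ, -(gB' K p.1 p.2) := iter2 hneg
    _ = -(∫ p : ℝ × ℝ, gB' K p.1 p.2) := integral_neg _

lemma step_hC2 :
    (∫ p : ℝ × ℝ × ℝ, fC2 K p.1 p.2.1 p.2.2)
      = -(∫ p : ℝ × ℝ × ℝ, fH K p.1 p.2.1 p.2.2) := by
  have hIrev : Integrable (fun p : ℝ × ℝ × ℝ => fC2 K p.2.2 p.1 p.2.1) :=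
    (master3_mk ((nice2_schwartz K).cc_mul) (nice2_schwartz (D2 K))
      (nice2_schwartz K)).congr
      (ae_of_all _ fun p => by simp only [fC2]; ring)
  have hneg : Integrable (fun p : ℝ × ℝ × ℝ => -(fH K p.1 p.2.1 p.2.2)) := (I_fH K).neg
  have inner : ∀ a b : ℝ, (∫ c : ℝ, fC2 K c a b) = ∫ c : ℝ, -(fH K a b c) := fun a b => by
    have h1 : (fun c => fC2 K c a b)
        = fun c => (cc a b * K (a, b)) * (D2 K (b, c) * K (c, a)) := by
      funext c; simp only [fC2]; ring
    have h2 : (fun c : ℝ => -(fH K a b c))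
        = fun c : ℝ => (-(cc a b * K (a, b))) * (K (b, c) * D1 K (c, a)) := by
      funext c; simp only [fH]; ring
    rw [h1, h2, integral_const_mul, integral_const_mul, ibpD K a b]
    ring
  calc (∫ p : ℝ × ℝ × ℝ, fC2 K p.1 p.2.1 p.2.2)
      = ∫ p : ℝ × ℝ × ℝ, fC2 K p.2.2 p.1 p.2.1 := (perm_cycle' (fC2 K)).symm
    _ = ∫ a : ℝ, ∫ b : ℝ, ∫ c : ℝ, fC2 K c a b :=
        (iter3 (fun a b c => fC2 K c a b) hIrev).symm
    _ = ∫ a : ℝ, ∫ b : ℝ, ∫ c : ℝ, -(fH K a b c) := by simp only [inner]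
    _ = ∫ p : ℝ × ℝ × ℝ, -(fH K p.1 p.2.1 p.2.2) :=
        iter3 (fun a b c => -(fH K a b c)) hneg
    _ = -(∫ p : ℝ × ℝ × ℝ, fH K p.1 p.2.1 p.2.2) := integral_neg _

lemma step_hH :
    (∫ p : ℝ × ℝ × ℝ, fA1 K p.1 p.2.1 p.2.2)
      = ∫ p : ℝ × ℝ × ℝ, fH K p.1 p.2.1 p.2.2 := by
  have hfun : (fun p : ℝ × ℝ × ℝ => fA1 K p.1 p.2.1 p.2.2)
      = fun p : ℝ × ℝ × ℝ => fH K p.2.2 p.1 p.2.1 := by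
    funext p; simp only [fA1, fH]; ring
  rw [hfun, perm_cycle' (fH K)]

lemma step_hA1split :
    (∫ p : ℝ × ℝ × ℝ, fA1 K p.1 p.2.1 p.2.2)
      = (∫ p : ℝ × ℝ × ℝ, fP K p.1 p.2.1 p.2.2)
        - ∫ p : ℝ × ℝ × ℝ, fQ K p.1 p.2.1 p.2.2 := by
  have hfun : (fun p : ℝ × ℝ × ℝ => fA1 K p.1 p.2.1 p.2.2)
      = fun p : ℝ × ℝ × ℝ => fP K p.1 p.2.1 p.2.2 - fQ K p.1 p.2.1 p.2.2 := by
    funext p; simp only [fA1, fP, fQ, cc]; ring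
  rw [hfun, integral_sub (I_fP K) (I_fQ K)]

lemma step_hP (hK : ∀ x z : ℝ, (∫ y : ℝ, K (x, y) * K (y, z)) = K (x, z)) :
    (∫ p : ℝ × ℝ × ℝ, fP K p.1 p.2.1 p.2.2) = ∫ p : ℝ × ℝ, gP2 K p.1 p.2 := by
  have hIrev : Integrable (fun p : ℝ × ℝ × ℝ => fP K p.2.2 p.1 p.2.1) :=
    (master3_mk ((nice2_schwartz (D1 K)).coe2_mul) (nice2_schwartz K)
      (nice2_schwartz K)).congr
      (ae_of_all _ fun p => by simp only [fP]; ring)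
  have inner : ∀ a b : ℝ, (∫ c : ℝ, fP K c a b) = gP2 K a b := fun a b => by
    have h1 : (fun c => fP K c a b)
        = fun c => ((b : ℂ) * D1 K (a, b)) * (K (b, c) * K (c, a)) := by
      funext c; simp only [fP]; ring
    rw [h1, integral_const_mul, hK b a]
    simp only [gP2]; ring
  calc (∫ p : ℝ × ℝ × ℝ, fP K p.1 p.2.1 p.2.2)
      = ∫ p : ℝ × ℝ × ℝ, fP K p.2.2 p.1 p.2.1 := (perm_cycle' (fP K)).symm
    _ = ∫ a : ℝ, ∫ b : ℝ, ∫ c : ℝ, fP K c a b :=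
        (iter3 (fun a b c => fP K c a b) hIrev).symm
    _ = ∫ a : ℝ, ∫ b : ℝ, gP2 K a b := by simp only [inner]
    _ = ∫ p : ℝ × ℝ, gP2 K p.1 p.2 := iter2 (I_gP2 K)

lemma step_hP2 :
    (∫ p : ℝ × ℝ, gP2 K p.1 p.2) = -(∫ p : ℝ × ℝ, gR K p.1 p.2) := by
  have hIsw : Integrable (fun p : ℝ × ℝ => gP2 K p.2 p.1) :=
    (master2 ((((nice2_schwartz (D1 K)).mul ((nice2_schwartz K).swap)).coe2_mul).swap)).congr
      (ae_of_all _ fun p => by simp only [gP2])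
  have hneg : Integrable (fun p : ℝ × ℝ => -(gR K p.1 p.2)) := (I_gR K).neg
  have inner : ∀ a : ℝ, (∫ b : ℝ, gP2 K b a) = ∫ b : ℝ, -(gR K a b) := fun a => by
    have h1 : (fun b => gP2 K b a)
        = fun b => (a : ℂ) * (K (a, b) * D1 K (b, a)) := by
      funext b; simp only [gP2]; ring
    have h2 : (fun b : ℝ => -(gR K a b))
        = fun b : ℝ => (-(a : ℂ)) * (D2 K (a, b) * K (b, a)) := by
      funext b; simp only [gR]; ring
    rw [h1, h2, integral_const_mul, integral_const_mul, ibpD K a a]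
    ring
  calc (∫ p : ℝ × ℝ, gP2 K p.1 p.2)
      = ∫ p : ℝ × ℝ, gP2 K p.2 p.1 := (perm_swap2 (gP2 K)).symm
    _ = ∫ a : ℝ, ∫ b : ℝ, gP2 K b a := (iter2 hIsw).symm
    _ = ∫ a : ℝ, ∫ b : ℝ, -(gR K a b) := by simp only [inner]
    _ = ∫ p : ℝ × ℝ, -(gR K p.1 p.2) := iter2 hneg
    _ = -(∫ p : ℝ × ℝ, gR K p.1 p.2) := integral_neg _

lemma step_hQ :
    (∫ p : ℝ × ℝ × ℝ, fQ K p.1 p.2.1 p.2.2)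
      = -(∫ p : ℝ × ℝ × ℝ, fHQ K p.1 p.2.1 p.2.2) := by
  have hIrev : Integrable (fun p : ℝ × ℝ × ℝ => fQ K p.2.1 p.2.2 p.1) :=
    (master3_mk ((nice2_schwartz K).coe2_mul) (nice2_schwartz K)
      (nice2_schwartz (D1 K))).congr
      (ae_of_all _ fun p => by simp only [fQ]; ring)
  have hneg : Integrable (fun p : ℝ × ℝ × ℝ => -(fHQ K p.1 p.2.1 p.2.2)) := (I_fHQ K).neg
  have inner : ∀ a b : ℝ, (∫ c : ℝ, fQ K b c a) = ∫ c : ℝ, -(fHQ K a b c) := fun a b => by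
    have h1 : (fun c => fQ K b c a)
        = fun c => ((b : ℂ) * K (a, b)) * (K (b, c) * D1 K (c, a)) := by
      funext c; simp only [fQ]; ring
    have h2 : (fun c : ℝ => -(fHQ K a b c))
        = fun c : ℝ => (-((b : ℂ) * K (a, b))) * (D2 K (b, c) * K (c, a)) := by
      funext c; simp only [fHQ]; ring
    rw [h1, h2, integral_const_mul, integral_const_mul, ibpD K a b]
    ring
  calc (∫ p : ℝ × ℝ × ℝ, fQ K p.1 p.2.1 p.2.2)
      = ∫ p : ℝ × ℝ × ℝ, fQ K p.2.1 p.2.2 p.1 := (perm_cycle (fQ K)).symm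
    _ = ∫ a : ℝ, ∫ b : ℝ, ∫ c : ℝ, fQ K b c a :=
        (iter3 (fun a b c => fQ K b c a) hIrev).symm
    _ = ∫ a : ℝ, ∫ b : ℝ, ∫ c : ℝ, -(fHQ K a b c) := by simp only [inner]
    _ = ∫ p : ℝ × ℝ × ℝ, -(fHQ K p.1 p.2.1 p.2.2) :=
        iter3 (fun a b c => -(fHQ K a b c)) hneg
    _ = -(∫ p : ℝ × ℝ × ℝ, fHQ K p.1 p.2.1 p.2.2) := integral_neg _

lemma step_hHQ (hK : ∀ x z : ℝ, (∫ y : ℝ, K (x, y) * K (y, z)) = K (x, z)) :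
    (∫ p : ℝ × ℝ × ℝ, fHQ K p.1 p.2.1 p.2.2) = ∫ p : ℝ × ℝ, gR K p.1 p.2 := by
  have hIrev : Integrable (fun p : ℝ × ℝ × ℝ => fHQ K p.2.2 p.1 p.2.1) :=
    (master3_mk ((nice2_schwartz (D2 K)).coe1_mul) (nice2_schwartz K)
      (nice2_schwartz K)).congr
      (ae_of_all _ fun p => by simp only [fHQ]; ring)
  have inner : ∀ a b : ℝ, (∫ c : ℝ, fHQ K c a b) = gR K a b := fun a b => by
    have h1 : (fun c => fHQ K c a b)
        = fun c => ((a : ℂ) * D2 K (a, b)) * (K (b, c) * K (c, a)) := by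
      funext c; simp only [fHQ]; ring
    rw [h1, integral_const_mul, hK b a]
    simp only [gR]; ring
  calc (∫ p : ℝ × ℝ × ℝ, fHQ K p.1 p.2.1 p.2.2)
      = ∫ p : ℝ × ℝ × ℝ, fHQ K p.2.2 p.1 p.2.1 := (perm_cycle' (fHQ K)).symm
    _ = ∫ a : ℝ, ∫ b : ℝ, ∫ c : ℝ, fHQ K c a b :=
        (iter3 (fun a b c => fHQ K c a b) hIrev).symm
    _ = ∫ a : ℝ, ∫ b : ℝ, gR K a b := by simp only [inner]
    _ = ∫ p : ℝ × ℝ, gR K p.1 p.2 := iter2 (I_gR K)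

end S16


open S16 in
/-- Let `K ∈ 𝒮(ℝ×ℝ; ℂ)` be a Schwartz kernel idempotent under kernel
composition.  Then `Tr(K ∘ DK ∘ XK) − Tr(K ∘ XK ∘ DK) = −Tr(K)`, written out as the
triple-integral identity. -/
theorem statement16 (K : SchwartzMap (ℝ × ℝ) ℂ)
    (hK : ∀ x z : ℝ, (∫ y : ℝ, K (x, y) * K (y, z)) = K (x, z)) :
    (∫ x : ℝ, ∫ y : ℝ, ∫ z : ℝ, K (x, y) * kerD ⇑K (y, z) * kerX ⇑K (z, x))
      - (∫ x : ℝ, ∫ y : ℝ, ∫ z : ℝ, K (x, y) * kerX ⇑K (y, z) * kerD ⇑K (z, x))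
      = -∫ x : ℝ, K (x, x) := by
  have e1 : ∀ x y z : ℝ, K (x, y) * kerD ⇑K (y, z) * kerX ⇑K (z, x)
      = fA1 K x y z + fA2 K x y z := by
    intro x y z
    simp only [kerD, kerX, fA1, fA2, D1, D2, cc, LineDeriv.lineDerivOpCLM_apply, SchwartzMap.lineDerivOp_apply_eq_fderiv,
      Complex.ofReal_sub]
    ring
  have e2 : ∀ x y z : ℝ, K (x, y) * kerX ⇑K (y, z) * kerD ⇑K (z, x)
      = fC1 K x y z + fC2 K x y z := by
    intro x y z
    simp only [kerD, kerX, fC1, fC2, D1, D2, cc, LineDeriv.lineDerivOpCLM_apply, SchwartzMap.lineDerivOp_apply_eq_fderiv,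
      Complex.ofReal_sub]
    ring
  have hadd1 : Integrable (fun p : ℝ × ℝ × ℝ =>
      fA1 K p.1 p.2.1 p.2.2 + fA2 K p.1 p.2.1 p.2.2) := (I_fA1 K).add (I_fA2 K)
  have hadd2 : Integrable (fun p : ℝ × ℝ × ℝ =>
      fC1 K p.1 p.2.1 p.2.2 + fC2 K p.1 p.2.1 p.2.2) := (I_fC1 K).add (I_fC2 K)
  have hI1 : (∫ x : ℝ, ∫ y : ℝ, ∫ z : ℝ, K (x, y) * kerD ⇑K (y, z) * kerX ⇑K (z, x))
      = (∫ p : ℝ × ℝ × ℝ, fA1 K p.1 p.2.1 p.2.2)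
        + ∫ p : ℝ × ℝ × ℝ, fA2 K p.1 p.2.1 p.2.2 := by
    calc (∫ x : ℝ, ∫ y : ℝ, ∫ z : ℝ, K (x, y) * kerD ⇑K (y, z) * kerX ⇑K (z, x))
        = ∫ x : ℝ, ∫ y : ℝ, ∫ z : ℝ, (fA1 K x y z + fA2 K x y z) := by simp only [e1]
      _ = ∫ p : ℝ × ℝ × ℝ, (fA1 K p.1 p.2.1 p.2.2 + fA2 K p.1 p.2.1 p.2.2) :=
          iter3 (fun x y z => fA1 K x y z + fA2 K x y z) hadd1
      _ = (∫ p : ℝ × ℝ × ℝ, fA1 K p.1 p.2.1 p.2.2)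
          + ∫ p : ℝ × ℝ × ℝ, fA2 K p.1 p.2.1 p.2.2 := integral_add (I_fA1 K) (I_fA2 K)
  have hI2 : (∫ x : ℝ, ∫ y : ℝ, ∫ z : ℝ, K (x, y) * kerX ⇑K (y, z) * kerD ⇑K (z, x))
      = (∫ p : ℝ × ℝ × ℝ, fC1 K p.1 p.2.1 p.2.2)
        + ∫ p : ℝ × ℝ × ℝ, fC2 K p.1 p.2.1 p.2.2 := by
    calc (∫ x : ℝ, ∫ y : ℝ, ∫ z : ℝ, K (x, y) * kerX ⇑K (y, z) * kerD ⇑K (z, x))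
        = ∫ x : ℝ, ∫ y : ℝ, ∫ z : ℝ, (fC1 K x y z + fC2 K x y z) := by simp only [e2]
      _ = ∫ p : ℝ × ℝ × ℝ, (fC1 K p.1 p.2.1 p.2.2 + fC2 K p.1 p.2.1 p.2.2) :=
          iter3 (fun x y z => fC1 K x y z + fC2 K x y z) hadd2
      _ = (∫ p : ℝ × ℝ × ℝ, fC1 K p.1 p.2.1 p.2.2)
          + ∫ p : ℝ × ℝ × ℝ, fC2 K p.1 p.2.1 p.2.2 := integral_add (I_fC1 K) (I_fC2 K)
  have hfA1 : (∫ p : ℝ × ℝ × ℝ, fA1 K p.1 p.2.1 p.2.2) = 0 := by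
    rw [step_hA1split, step_hP hK, step_hP2, step_hQ, step_hHQ hK]
    ring
  have hfH : (∫ p : ℝ × ℝ × ℝ, fH K p.1 p.2.1 p.2.2) = 0 := by
    rw [← step_hH]; exact hfA1
  rw [hI1, hI2, hfA1, step_hA2, step_hC1, step_hC2, hfH, step_ht1 hK, step_ht2 hK,
    step_hB, step_htr hK, step_hE hK]
  ring
end
end

section
/- Let M be a module over ℂ, Q a quadratic form on M, and Cl = CliffordAlgebra(Q) with canonical embedding ι : M → Cl and grade involution α. For x, ξ ∈ M define the ℂ-linear operator B(x,ξ) on Cl by B(x,ξ)(a) = ι(x)·a + i·α(a)·ι(ξ). Then B(x,ξ)∘B(x,ξ) = (Q(x) + Q(ξ))·id, i.e., for every a ∈ Cl, B(x,ξ)(B(x,ξ)(a)) = (Q(x) + Q(ξ))·a. -/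
/-- The symbol of the Bott–Dirac operator at `(x, ξ)`:
`B(x,ξ)(a) = ι(x)·a + i·α(a)·ι(ξ)`, where `α` is the grade involution. -/
noncomputable def bottSymbol {M : Type*} [AddCommGroup M] [Module ℂ M]
    (Q : QuadraticForm ℂ M) (x ξ : M) (a : CliffordAlgebra Q) : CliffordAlgebra Q :=
  CliffordAlgebra.ι Q x * a +
    Complex.I • (CliffordAlgebra.involute a * CliffordAlgebra.ι Q ξ)

/-- Let `M` be a `ℂ`-module, `Q` a quadratic form on `M`, and
`B(x,ξ)(a) = ι(x)·a + i·α(a)·ι(ξ)` on `CliffordAlgebra Q`.  Then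
`B(x,ξ) ∘ B(x,ξ) = (Q(x) + Q(ξ))·id`. -/
theorem statement18 (M : Type*) [AddCommGroup M] [Module ℂ M]
    (Q : QuadraticForm ℂ M) (x ξ : M) :
    ∀ a : CliffordAlgebra Q,
      bottSymbol Q x ξ (bottSymbol Q x ξ a) = (Q x + Q ξ) • a := by
  intro a
  unfold bottSymbol
  simp only [map_add, map_mul, map_smul, CliffordAlgebra.involute_ι,
    CliffordAlgebra.involute_involute, mul_add, add_mul,
    mul_smul_comm, smul_mul_assoc, smul_smul, Complex.I_mul_I, neg_mul, mul_neg, smul_neg,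
    neg_smul, one_smul, ← mul_assoc, CliffordAlgebra.ι_sq_scalar, add_smul]
  rw [mul_assoc a, CliffordAlgebra.ι_sq_scalar, Algebra.smul_def (Q x), Algebra.smul_def (Q ξ),
    ← Algebra.commutes (Q ξ) a]
  simp only [smul_add, smul_smul, smul_neg, neg_smul, mul_neg_one, neg_neg, Complex.I_mul_I,
    neg_one_smul, one_smul]
  abel
end
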